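/- arXiv:2201.03539 — 3 statements merged into one kernel-verified Lean document; each statement's English description precedes it below -/
import Mathlib

section
/- Let d ≥ 1 and let G be a polynomial in d complex variables such that G(1,…,1) = 0 and, for some δ > 0, G(z) ≠ 0 for every z in the product Δ-domain Δ_δ^d (this holds in particular when a rational function with denominator G is Δ-analytic at (1,…,1) and has a pole there). Then there exists j ∈ {1,…,d} such that the polynomial z_j − 1 divides G in ℂ[z_1,…,z_d]. -/
open MeasureTheory Real Set

noncomputable section

namespace ACSV

/-- The univariate Δ-domain `Δ_δ`. -/
def DeltaDom (δ : ℝ) : Set ℂ :=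
  {z : ℂ | ‖z‖ < 1 + δ ∧ z ≠ 1 ∧ |Complex.arg (1 - z)| < Real.pi / 2 + δ}

/-- The product Δ-domain `Δ_δ^d`. -/
def DeltaDomD (d : ℕ) (δ : ℝ) : Set (Fin d → ℂ) := {z | ∀ j, z j ∈ DeltaDom δ}

/-- The cone `K_δ`. -/
def ConeK (δ : ℝ) : Set ℂ := {u : ℂ | u ≠ 0 ∧ |Complex.arg u| < δ}

/-- The product cone `K_δ^d`. -/
def ConeKD (d : ℕ) (δ : ℝ) : Set (Fin d → ℂ) := {u | ∀ j, u j ∈ ConeK δ}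

/-- `Ω_δ = K_{π/2+δ}`. -/
def OmegaC (δ : ℝ) : Set ℂ := ConeK (Real.pi / 2 + δ)

/-- `Ω_δ^d`. -/
def OmegaCD (d : ℕ) (δ : ℝ) : Set (Fin d → ℂ) := {u | ∀ j, u j ∈ OmegaC δ}

/-- Polynomial type on the product Δ-domain. -/
def PolyTypeDelta (d : ℕ) (δ : ℝ) (A : (Fin d → ℂ) → ℂ) : Prop :=
  ∃ C : ℝ, 0 < C ∧ ∃ M : ℝ, 0 < M ∧ ∀ z ∈ DeltaDomD d δ,
    ‖A z‖ ≤ C * ∑ j, ‖z j - 1‖ ^ (-M)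

/-- (Two-ended) polynomial type on a subset of `ℂ^d`. -/
def PolyTypeCone (d : ℕ) (S : Set (Fin d → ℂ)) (F : (Fin d → ℂ) → ℂ) : Prop :=
  ∃ C : ℝ, 0 < C ∧ ∃ M : ℝ, 0 < M ∧ ∀ u ∈ S,
    ‖F u‖ ≤ C * ∑ j, (‖u j‖ ^ M + ‖u j‖ ^ (-M))

/-- Polynomial type locally at `0` on `Ω_δ^d`. -/
def PolyTypeLocZero (d : ℕ) (δ : ℝ) (H : (Fin d → ℂ) → ℂ) : Prop :=
  ∃ ε : ℝ, 0 < ε ∧ ∃ C : ℝ, 0 < C ∧ ∃ M : ℝ, 0 < M ∧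
    ∀ u ∈ OmegaCD d δ, (∀ j, ‖u j‖ < ε) →
      ‖H u‖ ≤ C * ∑ j, ‖u j‖ ^ (-M)

/-- Demi-analytic at `1 ∈ Δ_δ^d`. -/
def DemiAnalyticAtOne (d : ℕ) (δ : ℝ) (A : (Fin d → ℂ) → ℂ) : Prop :=
  ∃ ε : ℝ, 0 < ε ∧ ∃ As : Fin d → (Fin d → ℂ) → ℂ,
    (∀ z ∈ DeltaDomD d δ, (∀ i, ‖z i - 1‖ < ε) → A z = ∑ j, As j z) ∧
    ∀ j, AnalyticOnNhd ℂ (As j)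
      {z : Fin d → ℂ | (∀ i, ‖z i - 1‖ < ε) ∧ ∀ i, i ≠ j → z i ∈ DeltaDom δ}

/-- Demi-entire on `Ω_δ^d`. -/
def DemiEntireOmega (d : ℕ) (δ : ℝ) (H : (Fin d → ℂ) → ℂ) : Prop :=
  ∃ Hs : Fin d → (Fin d → ℂ) → ℂ,
    (∀ u ∈ OmegaCD d δ, H u = ∑ j, Hs j u) ∧
    ∀ j, AnalyticOnNhd ℂ (Hs j) {u : Fin d → ℂ | ∀ i, i ≠ j → u i ∈ OmegaC δ}

/-- `(θ0, θ)`-homogeneity on a set `S`. -/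
def Homog (d : ℕ) (S : Set (Fin d → ℂ)) (θ0 : ℝ) (θ : Fin d → ℝ)
    (H : (Fin d → ℂ) → ℂ) : Prop :=
  ∀ u ∈ S, ∀ σ : ℝ, 0 < σ →
    H (fun j => ((σ ^ θ j : ℝ) : ℂ) * u j) = ((σ ^ θ0 : ℝ) : ℂ) * H u

/-- The Hankel-type contour `γ_{δ'}`. -/
def hankel (δ' : ℝ) (t : ℝ) : ℂ :=
  if |t| ≤ 1 then Complex.exp (Complex.I * (t : ℂ) * ((Real.pi / 2 + δ' : ℝ) : ℂ))
  else if 1 ≤ t then (t : ℂ) * Complex.exp (Complex.I * ((Real.pi / 2 + δ' : ℝ) : ℂ))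
  else (-t : ℂ) * Complex.exp (-(Complex.I * ((Real.pi / 2 + δ' : ℝ) : ℂ)))

/-- The derivative `γ_{δ'}'`. -/
def hankelDeriv (δ' : ℝ) (t : ℝ) : ℂ :=
  if |t| ≤ 1 then
    Complex.I * ((Real.pi / 2 + δ' : ℝ) : ℂ) *
      Complex.exp (Complex.I * (t : ℂ) * ((Real.pi / 2 + δ' : ℝ) : ℂ))
  else if 1 ≤ t then Complex.exp (Complex.I * ((Real.pi / 2 + δ' : ℝ) : ℂ))
  else -Complex.exp (-(Complex.I * ((Real.pi / 2 + δ' : ℝ) : ℂ)))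

/-- The integrand of the Borel transform along `γ_{δ'}`. -/
def borelIntegrand (d : ℕ) (δ' : ℝ) (H : (Fin d → ℂ) → ℂ) (lam : Fin d → ℂ)
    (t : Fin d → ℝ) : ℂ :=
  H (fun j => hankel δ' (t j)) * Complex.exp (∑ j, lam j * hankel δ' (t j)) *
    ∏ j, hankelDeriv δ' (t j)

/-- The Borel transform `B_{δ'}[H]`. -/
def borel (d : ℕ) (δ' : ℝ) (H : (Fin d → ℂ) → ℂ) (lam : Fin d → ℂ) : ℂ :=
  (1 / (2 * (Real.pi : ℂ) * Complex.I)) ^ d * ∫ t : Fin d → ℝ, borelIntegrand d δ' H lam t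

/-- Univariate Borel integrand. -/
def borelIntegrand1 (δ' : ℝ) (H : ℂ → ℂ) (lam : ℂ) (t : ℝ) : ℂ :=
  H (hankel δ' t) * Complex.exp (lam * hankel δ' t) * hankelDeriv δ' t

/-- Univariate Borel transform. -/
def borel1 (δ' : ℝ) (H : ℂ → ℂ) (lam : ℂ) : ℂ :=
  (1 / (2 * (Real.pi : ℂ) * Complex.I)) * ∫ t : ℝ, borelIntegrand1 δ' H lam t

/-- The truncation domain `[c_1,∞) × ⋯ × [c_d,∞)`. -/
def laplaceDomain (d : ℕ) (c : Fin d → ℝ) : Set (Fin d → ℝ) :=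
  Set.univ.pi fun j => Set.Ici (c j)

/-- The integrand of the truncated Laplace transform. -/
def laplaceIntegrand (d : ℕ) (I : (Fin d → ℂ) → ℂ) (u : Fin d → ℂ)
    (lam : Fin d → ℝ) : ℂ :=
  Complex.exp (-(∑ j, (lam j : ℂ) * u j)) * I fun j => (lam j : ℂ)

/-- The truncated Laplace transform `L_c[I]`. -/
def laplace (d : ℕ) (c : Fin d → ℝ) (I : (Fin d → ℂ) → ℂ) (u : Fin d → ℂ) : ℂ :=
  ∫ lam in laplaceDomain d c, laplaceIntegrand d I u lam

/-- `A` is the sum of the (absolutely convergent) power series with coefficients `a`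
on some polydisc around `0`. -/
def IsPowerSeriesSum (d : ℕ) (a : (Fin d → ℕ) → ℂ) (A : (Fin d → ℂ) → ℂ) : Prop :=
  ∃ r : ℝ, 0 < r ∧ ∀ z : Fin d → ℂ, (∀ j, ‖z j‖ < r) →
    Summable (fun n : Fin d → ℕ => ‖a n‖ * ∏ j, ‖z j‖ ^ n j) ∧
    A z = ∑' n : Fin d → ℕ, a n * ∏ j, z j ^ n j


lemma digits_sum_lt {n M : ℕ} (f : Fin n → ℕ) (hf : ∀ j, f j < M) :
    ∑ j, f j * M ^ (j : ℕ) < M ^ n := by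
  induction n with
  | zero => simp
  | succ n ih =>
    rw [Fin.sum_univ_castSucc]
    have h1 : ∑ j : Fin n, f j.castSucc * M ^ (j : ℕ) < M ^ n :=
      ih (fun j => f j.castSucc) (fun j => hf _)
    have h2 : f (Fin.last n) < M := hf _
    have : (f (Fin.last n) + 1) * M ^ n ≤ M * M ^ n := by
      exact Nat.mul_le_mul_right _ h2
    simp only [Fin.val_last]
    calc (∑ j : Fin n, f j.castSucc * M ^ (j : ℕ)) + f (Fin.last n) * M ^ n
        < M ^ n + f (Fin.last n) * M ^ n := by omega
      _ = (f (Fin.last n) + 1) * M ^ n := by ring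
      _ ≤ M * M ^ n := this
      _ = M ^ (n + 1) := by ring

lemma digits_inj {n M : ℕ} {f g : Fin n → ℕ} (hf : ∀ j, f j < M) (hg : ∀ j, g j < M)
    (h : ∑ j, f j * M ^ (j : ℕ) = ∑ j, g j * M ^ (j : ℕ)) : f = g := by
  induction n with
  | zero => funext j; exact j.elim0
  | succ n ih =>
    rw [Fin.sum_univ_castSucc, Fin.sum_univ_castSucc] at h
    have h1 : ∑ j : Fin n, f j.castSucc * M ^ (j : ℕ) < M ^ n :=
      digits_sum_lt _ (fun j => hf _)
    have h2 : ∑ j : Fin n, g j.castSucc * M ^ (j : ℕ) < M ^ n :=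
      digits_sum_lt _ (fun j => hg _)
    simp only [Fin.val_last, Fin.coe_castSucc] at h
    have hlast : f (Fin.last n) = g (Fin.last n) := by
      rcases Nat.lt_trichotomy (f (Fin.last n)) (g (Fin.last n)) with hlt | heq | hgt
      · have h3 : (f (Fin.last n) + 1) * M ^ n ≤ g (Fin.last n) * M ^ n :=
          Nat.mul_le_mul_right _ hlt
        rw [add_mul, one_mul] at h3
        set A := ∑ j : Fin n, f j.castSucc * M ^ (j : ℕ) with hA
        set B := ∑ j : Fin n, g j.castSucc * M ^ (j : ℕ) with hB
        set FN := f (Fin.last n) * M ^ n with hFN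
        set GN := g (Fin.last n) * M ^ n with hGN
        omega
      · exact heq
      · have h3 : (g (Fin.last n) + 1) * M ^ n ≤ f (Fin.last n) * M ^ n :=
          Nat.mul_le_mul_right _ hgt
        rw [add_mul, one_mul] at h3
        set A := ∑ j : Fin n, f j.castSucc * M ^ (j : ℕ) with hA
        set B := ∑ j : Fin n, g j.castSucc * M ^ (j : ℕ) with hB
        set FN := f (Fin.last n) * M ^ n with hFN
        set GN := g (Fin.last n) * M ^ n with hGN
        omega
    rw [hlast] at h
    have hsum : ∑ j : Fin n, f j.castSucc * M ^ (j : ℕ)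
        = ∑ j : Fin n, g j.castSucc * M ^ (j : ℕ) := by
      exact Nat.add_right_cancel h
    have hcast := ih (fun j => hf _) (fun j => hg _) hsum
    funext j
    rcases Fin.eq_castSucc_or_eq_last j with ⟨i, rfl⟩ | rfl
    · exact congrFun hcast i
    · exact hlast

lemma exists_pos_point {d : ℕ} (F : Finset (Fin d →₀ ℕ)) (a : (Fin d →₀ ℕ) → ℂ)
    (ha : ∀ γ ∈ F, a γ ≠ 0) (P : Fin d) :
    ∃ c : Fin d → ℝ, (∀ j, 0 < c j) ∧
      ∀ k : ℕ, (F.filter (fun γ => γ P = k)).Nonempty →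
        (∑ γ ∈ F.filter (fun γ => γ P = k),
          a γ * ∏ j ∈ Finset.univ.erase P, ((c j : ℝ) : ℂ) ^ γ j) ≠ 0 := by
  classical
  set M : ℕ := 1 + F.sup (fun γ => ∑ j, γ j) with hM
  have hbound : ∀ γ ∈ F, ∀ j, γ j < M := by
    intro γ hγ j
    have h1 : γ j ≤ ∑ j', γ j' :=
      Finset.single_le_sum (fun _ _ => Nat.zero_le _) (Finset.mem_univ j)
    have h2 : (∑ j', γ j') ≤ F.sup (fun γ => ∑ j, γ j) :=
      Finset.le_sup (f := fun γ => ∑ j, γ j) hγ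
    omega
  set N : (Fin d →₀ ℕ) → ℕ := fun γ => ∑ j, (if j = P then 0 else γ j) * M ^ (j : ℕ) with hN
  have hNinj : ∀ k : ℕ, ∀ γ ∈ F.filter (fun γ => γ P = k),
      ∀ γ' ∈ F.filter (fun γ'' => γ'' P = k), N γ = N γ' → γ = γ' := by
    intro k γ hγ γ' hγ' hNN
    rw [Finset.mem_filter] at hγ hγ'
    have hfg := digits_inj (M := M) (f := fun j => if j = P then 0 else γ j)
      (g := fun j => if j = P then 0 else γ' j) ?_ ?_ hNN
    · ext j
      by_cases hj : j = P
      · rw [hj, hγ.2, hγ'.2]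
      · have := congrFun hfg j
        simpa [hj] using this
    · intro j; by_cases hj : j = P <;> simp [hj] <;> [omega; exact hbound _ hγ.1 j]
    · intro j; by_cases hj : j = P <;> simp [hj] <;> [omega; exact hbound _ hγ'.1 j]
  set q : ℕ → Polynomial ℂ := fun k => ∑ γ ∈ F.filter (fun γ => γ P = k),
    Polynomial.C (a γ) * Polynomial.X ^ N γ with hq
  have hcoeff : ∀ k : ℕ, ∀ γ₀ ∈ F.filter (fun γ => γ P = k), (q k).coeff (N γ₀) = a γ₀ := by
    intro k γ₀ hγ₀
    rw [hq]
    rw [Polynomial.finset_sum_coeff]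
    rw [Finset.sum_eq_single γ₀]
    · rw [Polynomial.coeff_C_mul, Polynomial.coeff_X_pow, if_pos rfl, mul_one]
    · intro γ hγ hne
      have hNne : N γ ≠ N γ₀ := fun h => hne (hNinj k γ hγ γ₀ hγ₀ h)
      rw [Polynomial.coeff_C_mul, Polynomial.coeff_X_pow, if_neg (Ne.symm hNne), mul_zero]
    · intro h; exact absurd hγ₀ h
  have hqne : ∀ k : ℕ, (F.filter (fun γ => γ P = k)).Nonempty → q k ≠ 0 := by
    intro k ⟨γ₀, hγ₀⟩ h0
    have := hcoeff k γ₀ hγ₀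
    rw [h0] at this
    exact ha γ₀ (Finset.mem_filter.mp hγ₀).1 (by simpa using this.symm)
  set Q : Polynomial ℂ := ∏ k ∈ F.image (fun γ => γ P), q k with hQ
  have hQne : Q ≠ 0 := by
    rw [hQ]
    apply Finset.prod_ne_zero_iff.mpr
    intro k hk
    obtain ⟨γ, hγ, hγk⟩ := Finset.mem_image.mp hk
    exact hqne k ⟨γ, Finset.mem_filter.mpr ⟨hγ, hγk⟩⟩
  have hfin : {x : ℂ | Q.IsRoot x}.Finite := Polynomial.finite_setOf_isRoot hQne
  have hfinR : {t : ℝ | Q.IsRoot (t : ℂ)}.Finite := by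
    have : {t : ℝ | Q.IsRoot (t : ℂ)} = Complex.ofReal ⁻¹' {x : ℂ | Q.IsRoot x} := rfl
    rw [this]
    exact Set.Finite.preimage (Set.injOn_of_injective Complex.ofReal_injective) hfin
  have hIoi : (Set.Ioi (0 : ℝ)).Infinite := Set.Ioi_infinite 0
  obtain ⟨t, ht⟩ := (hIoi.diff hfinR).nonempty
  obtain ⟨ht0, htne⟩ := ht
  rw [Set.mem_Ioi] at ht0
  refine ⟨fun j => t ^ (M ^ (j : ℕ)), fun j => pow_pos ht0 _, ?_⟩
  intro k hk
  have hsum_eq : (∑ γ ∈ F.filter (fun γ => γ P = k),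
      a γ * ∏ j ∈ Finset.univ.erase P, ((t ^ (M ^ (j : ℕ)) : ℝ) : ℂ) ^ γ j)
      = (q k).eval (t : ℂ) := by
    rw [hq, Polynomial.eval_finset_sum]
    apply Finset.sum_congr rfl
    intro γ hγ
    rw [Polynomial.eval_mul, Polynomial.eval_C, Polynomial.eval_pow, Polynomial.eval_X]
    congr 1
    have step : ∀ j : Fin d, ((t ^ (M ^ (j : ℕ)) : ℝ) : ℂ) ^ γ j
        = ((t : ℂ)) ^ ((if j = P then 0 else γ j) * M ^ (j : ℕ)) ∨ j = P := by
      intro j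
      by_cases hj : j = P
      · right; exact hj
      · left
        push_cast
        rw [← pow_mul, if_neg hj]
        ring_nf
    calc ∏ j ∈ Finset.univ.erase P, ((t ^ (M ^ (j : ℕ)) : ℝ) : ℂ) ^ γ j
        = ∏ j ∈ Finset.univ.erase P,
            ((t : ℂ)) ^ ((if j = P then 0 else γ j) * M ^ (j : ℕ)) := by
          apply Finset.prod_congr rfl
          intro j hj
          rcases step j with h | h
          · exact h
          · exact absurd h (Finset.ne_of_mem_erase hj)
      _ = (t : ℂ) ^ (∑ j ∈ Finset.univ.erase P, (if j = P then 0 else γ j) * M ^ (j : ℕ)) :=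
          Finset.prod_pow_eq_pow_sum _ _ _
      _ = (t : ℂ) ^ N γ := by
          congr 1
          simp only [hN]
          rw [← Finset.add_sum_erase _ _ (Finset.mem_univ P)]
          simp
  rw [hsum_eq]
  intro h0
  apply htne
  have : Q.eval (t : ℂ) = 0 := by
    rw [hQ, Polynomial.eval_prod]
    apply Finset.prod_eq_zero (i := k) ?_ h0
    obtain ⟨γ, hγ⟩ := hk
    rw [Finset.mem_filter] at hγ
    exact Finset.mem_image.mpr ⟨γ, hγ.1, hγ.2⟩
  exact this

lemma exists_ne_zero_root {f : Polynomial ℂ} {k1 k2 : ℕ} (hk : k1 < k2)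
    (h1 : f.coeff k1 ≠ 0) (h2 : f.coeff k2 ≠ 0) : ∃ w : ℂ, w ≠ 0 ∧ f.eval w = 0 := by
  have hf0 : f ≠ 0 := fun h => h1 (by simp [h])
  set T := f.natTrailingDegree with hT
  have hT1 : T ≤ k1 := Polynomial.natTrailingDegree_le_of_ne_zero h1
  have hdvd : Polynomial.X ^ T ∣ f := Polynomial.X_pow_dvd_iff.mpr
    (fun d hd => Polynomial.coeff_eq_zero_of_lt_natTrailingDegree hd)
  obtain ⟨g, hg⟩ := hdvd
  have hgk2 : g.coeff (k2 - T) ≠ 0 := by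
    have : f.coeff (k2 - T + T) = g.coeff (k2 - T) := by
      rw [hg, Polynomial.coeff_X_pow_mul]
    rw [Nat.sub_add_cancel (le_trans hT1 (le_of_lt hk))] at this
    rw [← this]; exact h2
  have hg0 : g.coeff 0 ≠ 0 := by
    have : f.coeff (0 + T) = g.coeff 0 := by
      rw [hg, Polynomial.coeff_X_pow_mul]
    rw [Nat.zero_add] at this
    rw [← this]
    have := Polynomial.trailingCoeff_nonzero_iff_nonzero.mpr hf0
    exact this
  have hdeg : 0 < g.degree := by
    rw [← Polynomial.natDegree_pos_iff_degree_pos]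
    have := Polynomial.le_natDegree_of_ne_zero hgk2
    omega
  obtain ⟨w, hw⟩ := Complex.exists_root hdeg
  refine ⟨w, ?_, ?_⟩
  · intro h0
    rw [h0] at hw
    rw [Polynomial.IsRoot, ← Polynomial.coeff_zero_eq_eval_zero] at hw
    exact hg0 hw
  · rw [hg, Polynomial.eval_mul, hw.eq_zero, mul_zero]

lemma exists_zero_of_min_modulus {f : ℂ → ℂ} (hf : Differentiable ℂ f) {w₀ : ℂ} {r μ : ℝ}
    (hr : 0 < r) (hμ : ∀ w ∈ Metric.sphere w₀ r, μ ≤ ‖f w‖) (hc : ‖f w₀‖ < μ) :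
    ∃ w ∈ Metric.closedBall w₀ r, f w = 0 := by
  have hμ0 : 0 < μ := lt_of_le_of_lt (norm_nonneg _) hc
  by_contra hcon
  push_neg at hcon
  have hne : ∀ w ∈ Metric.closedBall w₀ r, f w ≠ 0 := hcon
  have hdc : DiffContOnCl ℂ (fun w => (f w)⁻¹) (Metric.ball w₀ r) := by
    constructor
    · apply DifferentiableOn.inv (hf.differentiableOn)
      intro w hw
      exact hne w (Metric.ball_subset_closedBall hw)
    · rw [closure_ball w₀ (ne_of_gt hr)]
      apply ContinuousOn.inv₀ (hf.continuous.continuousOn)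
      intro w hw
      exact hne w hw
  have hb : Bornology.IsBounded (Metric.ball w₀ r) := Metric.isBounded_ball
  have hfr : ∀ z ∈ frontier (Metric.ball w₀ r), ‖(f z)⁻¹‖ ≤ μ⁻¹ := by
    intro z hz
    rw [frontier_ball w₀ (ne_of_gt hr)] at hz
    rw [norm_inv]
    exact inv_anti₀ hμ0 (hμ z hz)
  have hmem : w₀ ∈ closure (Metric.ball w₀ r) := by
    rw [closure_ball w₀ (ne_of_gt hr)]
    exact Metric.mem_closedBall_self (le_of_lt hr)
  have := Complex.norm_le_of_forall_mem_frontier_norm_le hb hdc hfr hmem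
  rw [norm_inv] at this
  have hfw0 : f w₀ ≠ 0 := hne w₀ (Metric.mem_closedBall_self (le_of_lt hr))
  have h0 : 0 < ‖f w₀‖ := norm_pos_iff.mpr hfw0
  have := (inv_le_inv₀ h0 hμ0).mp this
  linarith

lemma exists_closedBall_subset_cone {z : ℂ} (hz : z ≠ 0)
    (hza : |Complex.arg z| ≤ Real.pi / 2) {δ : ℝ} (hδ : 0 < δ) :
    ∃ r > 0, Metric.closedBall z r ⊆
      {w : ℂ | w ≠ 0 ∧ |Complex.arg w| < Real.pi / 2 + δ} := by
  have hre : 0 ≤ z.re := Complex.abs_arg_le_pi_div_two_iff.mp hza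
  have hslit : z ∈ Complex.slitPlane := by
    rw [Complex.mem_slitPlane_iff]
    rcases lt_or_eq_of_le hre with h | h
    · exact Or.inl h
    · right
      intro him
      exact hz (Complex.ext (by simp [← h]) (by simp [him]))
  have harg : ContinuousAt Complex.arg z := Complex.continuousAt_arg hslit
  have habs : ContinuousAt (fun w => |Complex.arg w|) z := harg.abs
  have hlt : |Complex.arg z| < Real.pi / 2 + δ := lt_of_le_of_lt hza (by linarith)
  have hev1 : ∀ᶠ w in nhds z, |Complex.arg w| < Real.pi / 2 + δ :=
    habs.eventually_lt_const hlt
  have hev2 : ∀ᶠ w in nhds z, w ≠ 0 := eventually_ne_nhds hz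
  have hev := hev1.and hev2
  obtain ⟨r, hr0, hball⟩ := Metric.eventually_nhds_iff_ball.mp hev
  refine ⟨r / 2, by linarith, ?_⟩
  intro w hw
  have : w ∈ Metric.ball z r := by
    rw [Metric.mem_closedBall] at hw
    rw [Metric.mem_ball]
    linarith
  obtain ⟨h1, h2⟩ := hball w this
  exact ⟨h2, h1⟩

lemma exists_weight {d : ℕ} (S : Finset (Fin d →₀ ℕ)) (hne : S.Nonempty)
    (h0 : (0 : Fin d →₀ ℕ) ∉ S) (hcoord : ∀ j, ∃ γ ∈ S, γ j = 0) :
    ∃ (v : Fin d → ℕ) (P : Fin d) (α β : Fin d →₀ ℕ), (∀ j, 1 ≤ v j) ∧ (∀ j, v j ≤ v P) ∧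
      α ∈ S ∧ β ∈ S ∧ α P ≠ β P ∧ (∀ γ ∈ S, ∑ j, v j * α j ≤ ∑ j, v j * γ j) ∧
      (∑ j, v j * β j = ∑ j, v j * α j) := by
  classical
  obtain ⟨μ, hμS, hμmin⟩ := S.exists_min_image (fun γ => ∑ j, γ j) hne
  by_cases hcase : ∃ β ∈ S, (∑ j, β j = ∑ j, μ j) ∧ β ≠ μ
  · obtain ⟨β, hβS, hβsum, hβne⟩ := hcase
    have hP : ∃ P, β P ≠ μ P := by
      by_contra hall
      push_neg at hall
      exact hβne (Finsupp.ext hall)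
    obtain ⟨P, hPne⟩ := hP
    refine ⟨fun _ => 1, P, μ, β, fun _ => le_refl 1, fun _ => le_refl 1, hμS, hβS,
      Ne.symm hPne, ?_, ?_⟩
    · intro γ hγ
      simpa using hμmin γ hγ
    · simpa using hβsum
  · push_neg at hcase
    have hμ0 : μ ≠ 0 := fun h => h0 (h ▸ hμS)
    have hj0 : ∃ j0, μ j0 ≠ 0 := by
      by_contra hall
      push_neg at hall
      exact hμ0 (Finsupp.ext hall)
    obtain ⟨j0, hμj0⟩ := hj0
    obtain ⟨γhat, hγhatS, hγhat0⟩ := hcoord j0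
    set B := S.filter (fun γ => γ j0 < μ j0) with hB
    have hBne : B.Nonempty := ⟨γhat, Finset.mem_filter.mpr ⟨hγhatS, by omega⟩⟩
    obtain ⟨γ'', hγ''B, hγ''min⟩ := B.exists_min_image
      (fun γ => ((∑ j, γ j : ℕ) - (∑ j, μ j : ℕ) : ℚ) / ((μ j0 : ℚ) - (γ j0 : ℕ))) hBne
    rw [hB, Finset.mem_filter] at hγ''B
    obtain ⟨hγ''S, hγ''lt⟩ := hγ''B
    have hγ''ne : γ'' ≠ μ := by
      intro h
      rw [h] at hγ''lt
      omega
    have hsumlt : ∑ j, μ j < ∑ j, γ'' j := by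
      rcases lt_or_eq_of_le (hμmin γ'' hγ''S) with h | h
      · exact h
      · exact absurd (hcase γ'' hγ''S h.symm) hγ''ne
    set q := μ j0 - γ'' j0 with hqdef
    set r := (∑ j, γ'' j) - (∑ j, μ j) with hrdef
    have hq1 : 1 ≤ q := by omega
    have hr1 : 1 ≤ r := by omega
    set v : Fin d → ℕ := fun j => q + if j = j0 then r else 0 with hv
    have hL : ∀ γ : Fin d →₀ ℕ, ∑ j, v j * γ j = q * (∑ j, γ j) + r * γ j0 := by
      intro γ
      simp only [hv]
      rw [Finset.sum_congr rfl (fun j _ => by rw [add_mul])]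
      rw [Finset.sum_add_distrib, ← Finset.mul_sum]
      congr 1
      rw [Finset.sum_congr rfl (fun j (_ : j ∈ Finset.univ) => by
        rw [ite_mul, zero_mul] : ∀ j ∈ Finset.univ,
          (if j = j0 then r else 0) * γ j = if j = j0 then r * γ j else 0)]
      rw [Finset.sum_ite_eq' Finset.univ j0 (fun j => r * γ j)]
      simp
    -- key minimality in ℚ
    have hkey : ∀ γ ∈ S, γ j0 < μ j0 →
        (r : ℚ) * ((μ j0 : ℚ) - (γ j0 : ℕ)) ≤ (q : ℚ) * ((∑ j, γ j : ℕ) - (∑ j, μ j : ℕ)) := by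
      intro γ hγS hγlt
      have hγB : γ ∈ B := Finset.mem_filter.mpr ⟨hγS, hγlt⟩
      have hmin := hγ''min γ hγB
      have hd1 : (0 : ℚ) < (μ j0 : ℚ) - (γ'' j0 : ℕ) := by
        have : (γ'' j0 : ℚ) < (μ j0 : ℚ) := by exact_mod_cast hγ''lt
        linarith
      have hd2 : (0 : ℚ) < (μ j0 : ℚ) - (γ j0 : ℕ) := by
        have : (γ j0 : ℚ) < (μ j0 : ℚ) := by exact_mod_cast hγlt
        linarith
      rw [div_le_div_iff₀ hd1 hd2] at hmin
      have hqq : (q : ℚ) = (μ j0 : ℚ) - (γ'' j0 : ℕ) := by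
        rw [hqdef]; push_cast [Nat.cast_sub (le_of_lt hγ''lt)]; ring
      have hrr : (r : ℚ) = (∑ j, γ'' j : ℕ) - (∑ j, μ j : ℕ) := by
        rw [hrdef]; push_cast [Nat.cast_sub (le_of_lt hsumlt)]; ring
      rw [hqq, hrr]
      nlinarith [hmin]
    refine ⟨v, j0, μ, γ'', fun j => by simp [hv]; omega,
      fun j => by by_cases hj : j = j0 <;> simp [hv, hj] <;> omega,
      hμS, hγ''S, by omega, ?_, ?_⟩
    · intro γ hγS
      rw [hL, hL]
      by_cases hj : μ j0 ≤ γ j0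
      · have h1 : q * (∑ j, μ j) ≤ q * (∑ j, γ j) := Nat.mul_le_mul_left _ (hμmin γ hγS)
        have h2 : r * μ j0 ≤ r * γ j0 := Nat.mul_le_mul_left _ hj
        omega
      · push_neg at hj
        have hk := hkey γ hγS hj
        -- cast goal to ℚ
        rw [← @Nat.cast_le ℚ]
        push_cast [-Nat.cast_sum]
        nlinarith [hk]
    · rw [hL, hL]
      rw [← @Nat.cast_inj ℚ]
      push_cast [-Nat.cast_sum]
      have h1 : (q : ℚ) * ((∑ j, γ'' j : ℕ) - (∑ j, μ j : ℕ))
          = (r : ℚ) * ((μ j0 : ℚ) - (γ'' j0 : ℕ)) := by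
        have hqq : (q : ℚ) = (μ j0 : ℚ) - (γ'' j0 : ℕ) := by
          rw [hqdef]; push_cast [Nat.cast_sub (le_of_lt hγ''lt)]; ring
        have hrr : (r : ℚ) = (∑ j, γ'' j : ℕ) - (∑ j, μ j : ℕ) := by
          rw [hrdef]; push_cast [Nat.cast_sub (le_of_lt hsumlt)]; ring
        rw [hqq, hrr]; ring
      nlinarith [h1]

lemma eval_aeval_one_sub {d : ℕ} (G : MvPolynomial (Fin d) ℂ) (u : Fin d → ℂ) :
    MvPolynomial.eval u
        (MvPolynomial.aeval (fun j => 1 - MvPolynomial.X j :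
          Fin d → MvPolynomial (Fin d) ℂ) G)
      = MvPolynomial.eval (fun j => 1 - u j) G := by
  induction G using MvPolynomial.induction_on with
  | C a => simp
  | add p q hp hq => rw [map_add, map_add, hp, hq, map_add]
  | mul_X p j hp =>
      rw [map_mul, map_mul, hp, MvPolynomial.aeval_X, map_mul, MvPolynomial.eval_X]
      rw [map_sub, map_one, MvPolynomial.eval_X]

lemma aeval_one_sub_invol {d : ℕ} (G : MvPolynomial (Fin d) ℂ) :
    MvPolynomial.aeval (fun j => 1 - MvPolynomial.X j : Fin d → MvPolynomial (Fin d) ℂ)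
      (MvPolynomial.aeval (fun j => 1 - MvPolynomial.X j :
        Fin d → MvPolynomial (Fin d) ℂ) G) = G := by
  induction G using MvPolynomial.induction_on with
  | C a => simp
  | add p q hp hq => rw [map_add, map_add, hp, hq]
  | mul_X p j hp =>
      rw [map_mul, map_mul, hp, MvPolynomial.aeval_X, map_sub, map_one, MvPolynomial.aeval_X]
      ring

lemma X_dvd_of_support {d : ℕ} (p : MvPolynomial (Fin d) ℂ) (j : Fin d)
    (h : ∀ γ ∈ p.support, γ j ≠ 0) : MvPolynomial.X j ∣ p := by
  classical
  rw [← MvPolynomial.support_sum_monomial_coeff p]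
  apply Finset.dvd_sum
  intro γ hγ
  rw [MvPolynomial.X_dvd_monomial]
  exact Or.inr (h γ hγ)

set_option maxHeartbeats 2000000 in
/-- genuinely multivariate rational functions are never
Δ-analytic. -/
theorem stmt14 (d : ℕ) (hd : 1 ≤ d) (G : MvPolynomial (Fin d) ℂ)
    (hG1 : MvPolynomial.eval (fun _ => (1 : ℂ)) G = 0)
    (δ : ℝ) (hδ : 0 < δ)
    (hGne : ∀ z ∈ DeltaDomD d δ, MvPolynomial.eval z G ≠ 0) :
    ∃ j : Fin d, (MvPolynomial.X j - 1 : MvPolynomial (Fin d) ℂ) ∣ G := by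
  classical
  by_contra hcon
  push_neg at hcon
  set p : MvPolynomial (Fin d) ℂ :=
    MvPolynomial.aeval (fun j => 1 - MvPolynomial.X j) G with hpdef
  -- basic facts about p
  have hpu : ∀ u : Fin d → ℂ, MvPolynomial.eval u p = MvPolynomial.eval (fun j => 1 - u j) G :=
    fun u => eval_aeval_one_sub G u
  have hXdvd : ∀ j : Fin d, ¬ (MvPolynomial.X j ∣ p) := by
    intro j hdvd
    obtain ⟨q, hq⟩ := hdvd
    apply hcon j
    have hGf : G = (1 - MvPolynomial.X j) *
        MvPolynomial.aeval (fun i => 1 - MvPolynomial.X i) q := by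
      conv_lhs => rw [← aeval_one_sub_invol G, ← hpdef, hq]
      rw [map_mul, MvPolynomial.aeval_X]
    exact ⟨-(MvPolynomial.aeval (fun i => 1 - MvPolynomial.X i) q), by rw [hGf]; ring⟩
  have hzero_mem : (fun _ => (0 : ℂ)) ∈ DeltaDomD d δ := by
    intro j
    refine ⟨by simp only [norm_zero]; linarith, zero_ne_one, ?_⟩
    simp [Complex.arg_one]
    positivity
  have hpne : p ≠ 0 := by
    intro h0
    apply hGne (fun _ => (0 : ℂ)) hzero_mem
    have := hpu (fun _ => (1 : ℂ))
    rw [h0] at this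
    simp only [map_zero] at this
    rw [show (fun j : Fin d => 1 - (fun _ => (1:ℂ)) j) = (fun _ => (0:ℂ)) by funext j; ring]
      at this
    exact this.symm
  have hsupp0 : (0 : Fin d →₀ ℕ) ∉ p.support := by
    rw [MvPolynomial.mem_support_iff]
    intro hne0
    apply hne0
    have h1 : MvPolynomial.coeff 0 p = MvPolynomial.eval (fun _ => (0:ℂ)) p := by
      rw [MvPolynomial.eval_zero']
      rfl
    rw [h1, hpu]
    rw [show (fun j : Fin d => 1 - (fun _ => (0:ℂ)) j) = (fun _ => (1:ℂ)) by funext j; ring]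
    exact hG1
  have hsuppj : ∀ j : Fin d, ∃ γ ∈ p.support, γ j = 0 := by
    intro j
    by_contra hno
    push_neg at hno
    exact hXdvd j (X_dvd_of_support p j hno)
  have hSne : p.support.Nonempty := MvPolynomial.support_nonempty.mpr hpne
  obtain ⟨v, P, α, β, hv1, hvP, hαS, hβS, hαβ, hmin, hβeq⟩ :=
    exists_weight p.support hSne hsupp0 hsuppj
  set a : (Fin d →₀ ℕ) → ℂ := fun γ => MvPolynomial.coeff γ p with hadef
  set L : (Fin d →₀ ℕ) → ℕ := fun γ => ∑ j, v j * γ j with hLdef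
  set m : ℕ := L α with hmdef
  set F : Finset (Fin d →₀ ℕ) := p.support.filter (fun γ => L γ = m) with hFdef
  have hαF : α ∈ F := Finset.mem_filter.mpr ⟨hαS, rfl⟩
  have hβF : β ∈ F := Finset.mem_filter.mpr ⟨hβS, hβeq⟩
  have hsplit : ∀ γ : Fin d →₀ ℕ, L γ = v P * γ P + ∑ j ∈ Finset.univ.erase P, v j * γ j := by
    intro γ
    rw [hLdef]
    exact (Finset.add_sum_erase _ _ (Finset.mem_univ P)).symm
  have haF : ∀ γ ∈ F, a γ ≠ 0 := by
    intro γ hγ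
    exact MvPolynomial.mem_support_iff.mp (Finset.mem_filter.mp hγ).1
  obtain ⟨c, hcpos, hcne⟩ := exists_pos_point F a haF P
  -- the positive-real-coefficient slice polynomial
  set Cc : (Fin d →₀ ℕ) → ℂ := fun γ => ∏ j ∈ Finset.univ.erase P, ((c j : ℝ) : ℂ) ^ γ j
    with hCcdef
  set fc : Polynomial ℂ :=
    ∑ γ ∈ F, Polynomial.C (a γ * Cc γ) * Polynomial.X ^ (γ P) with hfcdef
  have hfc_coeff : ∀ k : ℕ,
      fc.coeff k = ∑ γ ∈ F.filter (fun γ => γ P = k), a γ * Cc γ := by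
    intro k
    rw [hfcdef, Polynomial.finset_sum_coeff]
    conv_rhs => rw [Finset.sum_filter]
    apply Finset.sum_congr rfl
    intro γ hγ
    rw [Polynomial.coeff_C_mul, Polynomial.coeff_X_pow]
    by_cases h : γ P = k
    · rw [if_pos h, if_pos h.symm, mul_one]
    · rw [if_neg h, if_neg (Ne.symm h), mul_zero]
  have hfcα : fc.coeff (α P) ≠ 0 := by
    rw [hfc_coeff]
    exact hcne (α P) ⟨α, Finset.mem_filter.mpr ⟨hαF, rfl⟩⟩
  have hfcβ : fc.coeff (β P) ≠ 0 := by
    rw [hfc_coeff]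
    exact hcne (β P) ⟨β, Finset.mem_filter.mpr ⟨hβF, rfl⟩⟩
  have hroot : ∃ w : ℂ, w ≠ 0 ∧ fc.eval w = 0 := by
    rcases lt_or_gt_of_ne hαβ with h | h
    · exact exists_ne_zero_root h hfcα hfcβ
    · exact exists_ne_zero_root h hfcβ hfcα
  obtain ⟨w₀, hw₀ne, hw₀root⟩ := hroot
  set ψ : ℝ := Complex.arg w₀ with hψdef
  have hψIoc : ψ ∈ Set.Ioc (-Real.pi) Real.pi := Complex.arg_mem_Ioc w₀
  have hvP0 : (0 : ℝ) < (v P : ℝ) := by exact_mod_cast Nat.lt_of_lt_of_le Nat.zero_lt_one (hv1 P)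
  set θ : ℝ := -ψ / (2 * (v P : ℝ)) with hθdef
  set σ : ℂ := Complex.exp ((θ : ℂ) * Complex.I) with hσdef
  have hσne : σ ≠ 0 := Complex.exp_ne_zero _
  -- angle bounds
  have hθbound : ∀ j : Fin d, |θ * (v j : ℝ)| ≤ Real.pi / 2 := by
    intro j
    have hvj : (v j : ℝ) ≤ (v P : ℝ) := by exact_mod_cast hvP j
    have hvj0 : (0 : ℝ) < (v j : ℝ) := by exact_mod_cast Nat.lt_of_lt_of_le Nat.zero_lt_one (hv1 j)
    have hψabs : |ψ| ≤ Real.pi := Complex.abs_arg_le_pi w₀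
    rw [hθdef, abs_mul, abs_div]
    rw [abs_neg]
    have h2vP : |2 * (v P : ℝ)| = 2 * (v P : ℝ) := abs_of_pos (by linarith)
    rw [h2vP, abs_of_pos hvj0]
    rw [div_mul_eq_mul_div, div_le_iff₀ (by linarith)]
    calc |ψ| * (v j : ℝ) ≤ Real.pi * (v P : ℝ) :=
      mul_le_mul hψabs hvj (le_of_lt hvj0) Real.pi_pos.le
    _ = Real.pi / 2 * (2 * (v P : ℝ)) := by ring
  -- rotated coefficients
  set cs : Fin d → ℂ := fun j => σ ^ (v j) * (c j : ℝ) with hcsdef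
  set Cs : (Fin d →₀ ℕ) → ℂ := fun γ => ∏ j ∈ Finset.univ.erase P, cs j ^ γ j with hCsdef
  have hCs : ∀ γ : Fin d →₀ ℕ,
      Cs γ = σ ^ (∑ j ∈ Finset.univ.erase P, v j * γ j) * Cc γ := by
    intro γ
    rw [hCsdef, hCcdef]
    simp only [hcsdef]
    rw [← Finset.prod_pow_eq_pow_sum]
    rw [← Finset.prod_mul_distrib]
    apply Finset.prod_congr rfl
    intro j hj
    rw [mul_pow, ← pow_mul]
  -- the rotated polynomial
  set Q : Polynomial ℂ :=
    ∑ γ ∈ F, Polynomial.C (a γ * Cs γ) * Polynomial.X ^ (γ P) with hQdef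
  have hQ_coeff : ∀ k : ℕ,
      Q.coeff k = ∑ γ ∈ F.filter (fun γ => γ P = k), a γ * Cs γ := by
    intro k
    rw [hQdef, Polynomial.finset_sum_coeff]
    conv_rhs => rw [Finset.sum_filter]
    apply Finset.sum_congr rfl
    intro γ hγ
    rw [Polynomial.coeff_C_mul, Polynomial.coeff_X_pow]
    by_cases h : γ P = k
    · rw [if_pos h, if_pos h.symm, mul_one]
    · rw [if_neg h, if_neg (Ne.symm h), mul_zero]
  have herase_eq : ∀ γ ∈ F, v P * γ P + (∑ j ∈ Finset.univ.erase P, v j * γ j) = m := by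
    intro γ hγ
    have := (Finset.mem_filter.mp hγ).2
    rw [← hsplit γ]
    exact this
  have hQ_coeff_rel : ∀ k : ℕ, Q.coeff k = σ ^ (m - v P * k) * fc.coeff k := by
    intro k
    rw [hQ_coeff, hfc_coeff, Finset.mul_sum]
    apply Finset.sum_congr rfl
    intro γ hγ
    rw [Finset.mem_filter] at hγ
    obtain ⟨hγF, hγk⟩ := hγ
    rw [hCs γ]
    have h1 := herase_eq γ hγF
    rw [hγk] at h1
    have h2 : ∑ j ∈ Finset.univ.erase P, v j * γ j = m - v P * k := by omega
    rw [h2]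
    ring
  have hQα : Q.coeff (α P) ≠ 0 := by
    rw [hQ_coeff_rel]
    exact mul_ne_zero (pow_ne_zero _ hσne) hfcα
  have hQne : Q ≠ 0 := fun h => hQα (by rw [h]; simp)
  -- wstar
  set wstar : ℂ := σ ^ (v P) * w₀ with hwstardef
  have hσvP : σ ^ (v P) = Complex.exp (((-(ψ/2) : ℝ) : ℂ) * Complex.I) := by
    rw [hσdef, ← Complex.exp_nat_mul]
    have hvpθ : (v P : ℝ) * θ = -(ψ/2) := by
      rw [hθdef]
      field_simp
    congr 1
    calc ((v P : ℕ) : ℂ) * (((θ : ℝ) : ℂ) * Complex.I)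
        = ((((v P : ℝ) * θ : ℝ)) : ℂ) * Complex.I := by push_cast; ring
      _ = ((-(ψ/2) : ℝ) : ℂ) * Complex.I := by rw [hvpθ]
  have hwstar_polar : wstar = ((‖w₀‖ : ℝ) : ℂ) *
      Complex.exp (((ψ/2 : ℝ) : ℂ) * Complex.I) := by
    rw [hwstardef, hσvP]
    conv_lhs => rw [← Complex.norm_mul_exp_arg_mul_I w₀]
    rw [← hψdef]
    rw [mul_comm (Complex.exp _), mul_assoc, ← Complex.exp_add]
    congr 2
    push_cast
    ring
  have habsw₀ : (0 : ℝ) < ‖w₀‖ := by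
    rw [norm_pos_iff]
    exact hw₀ne
  have hψ2Ioc : ψ / 2 ∈ Set.Ioc (-Real.pi) Real.pi := by
    obtain ⟨h1, h2⟩ := hψIoc
    constructor
    · nlinarith [Real.pi_pos]
    · nlinarith [Real.pi_pos]
  have hargwstar : Complex.arg wstar = ψ / 2 := by
    rw [hwstar_polar, Complex.exp_mul_I]
    exact Complex.arg_mul_cos_add_sin_mul_I habsw₀ hψ2Ioc
  have hwstar_ne : wstar ≠ 0 := by
    rw [hwstardef]
    exact mul_ne_zero (pow_ne_zero _ hσne) hw₀ne
  have hargwstar_le : |Complex.arg wstar| ≤ Real.pi / 2 := by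
    rw [hargwstar, abs_div]
    have := Complex.abs_arg_le_pi w₀
    rw [← hψdef] at this
    simp only [abs_two]
    linarith [abs_nonneg ψ]
  -- Q.eval wstar = 0
  have hQwstar : Q.eval wstar = σ ^ m * fc.eval w₀ := by
    rw [hQdef, hfcdef, Polynomial.eval_finset_sum, Polynomial.eval_finset_sum, Finset.mul_sum]
    apply Finset.sum_congr rfl
    intro γ hγ
    rw [Polynomial.eval_mul, Polynomial.eval_C, Polynomial.eval_pow, Polynomial.eval_X]
    rw [Polynomial.eval_mul, Polynomial.eval_C, Polynomial.eval_pow, Polynomial.eval_X]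
    rw [hCs γ, hwstardef, mul_pow, ← pow_mul]
    have h1 := herase_eq γ hγ
    have h2 : σ ^ (∑ j ∈ Finset.univ.erase P, v j * γ j) * σ ^ (v P * γ P) = σ ^ m := by
      rw [← pow_add]
      congr 1
      omega
    calc a γ * (σ ^ (∑ j ∈ Finset.univ.erase P, v j * γ j) * Cc γ) *
          (σ ^ (v P * γ P) * w₀ ^ γ P)
        = (σ ^ (∑ j ∈ Finset.univ.erase P, v j * γ j) * σ ^ (v P * γ P)) *
          (a γ * Cc γ * w₀ ^ γ P) := by ring
      _ = σ ^ m * (a γ * Cc γ * w₀ ^ γ P) := by rw [h2]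
  have hQwstar0 : Q.eval wstar = 0 := by
    rw [hQwstar, hw₀root, mul_zero]
  -- choose a radius
  obtain ⟨rc, hrc0, hrc⟩ := exists_closedBall_subset_cone hwstar_ne hargwstar_le hδ
  have hrootfin : {x : ℂ | Q.IsRoot x}.Finite := Polynomial.finite_setOf_isRoot hQne
  have hbadfin : ((fun x => dist x wstar) '' {x : ℂ | Q.IsRoot x}).Finite := hrootfin.image _
  obtain ⟨r, hrmem, hrbad⟩ := ((Set.Ioo_infinite hrc0).diff hbadfin).nonempty
  obtain ⟨hr0, hrrc⟩ := hrmem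
  have hball_cone : Metric.closedBall wstar r ⊆
      {w : ℂ | w ≠ 0 ∧ |Complex.arg w| < Real.pi / 2 + δ} :=
    subset_trans (Metric.closedBall_subset_closedBall (le_of_lt hrrc)) hrc
  have hsphere_no_root : ∀ w ∈ Metric.sphere wstar r, Q.eval w ≠ 0 := by
    intro w hw h0
    apply hrbad
    exact ⟨w, h0, hw⟩
  -- minimum on the sphere
  have hsne : (Metric.sphere wstar r).Nonempty := NormedSpace.sphere_nonempty.mpr (le_of_lt hr0)
  obtain ⟨wmin, hwmin_mem, hwmin⟩ := (isCompact_sphere wstar r).exists_isMinOn hsne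
    ((Polynomial.continuous Q).norm.continuousOn)
  set μ : ℝ := ‖Q.eval wmin‖ with hμdef
  have hμpos : 0 < μ := by
    rw [hμdef, norm_pos_iff]
    exact hsphere_no_root wmin hwmin_mem
  have hμsph : ∀ w ∈ Metric.sphere wstar r, μ ≤ ‖Q.eval w‖ := fun w hw => hwmin hw
  clear_value μ
  -- the perturbation function
  set W : ℝ := ‖wstar‖ + r with hWdef
  have hW0 : 0 ≤ W := by
    rw [hWdef]
    have := norm_nonneg wstar
    linarith
  have hWball : ∀ w ∈ Metric.closedBall wstar r, ‖w‖ ≤ W := by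
    intro w hw
    rw [Metric.mem_closedBall] at hw
    have h1 : ‖w‖ - ‖wstar‖ ≤ ‖w - wstar‖ := norm_sub_norm_le _ _
    rw [← dist_eq_norm] at h1
    rw [hWdef]
    linarith
  have hWstar_le : ‖wstar‖ ≤ W := by
    rw [hWdef]
    linarith
  clear_value W
  set Ψ : ℝ → ℂ → ℂ := fun s w =>
    ∑ γ ∈ p.support, a γ * Cs γ * w ^ (γ P) * ((s : ℝ) : ℂ) ^ (L γ - m) with hΨdef
  set uu : ℝ → ℂ → Fin d → ℂ := fun s w j =>
    if j = P then ((s ^ (v P) : ℝ) : ℂ) * w else ((s ^ (v j) : ℝ) : ℂ) * cs j with huudef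
  have hI1 : ∀ (s : ℝ) (w : ℂ),
      MvPolynomial.eval (uu s w) p = ((s : ℝ) : ℂ) ^ m * Ψ s w := by
    intro s w
    rw [MvPolynomial.eval_eq']
    simp only [hΨdef]
    rw [Finset.mul_sum]
    apply Finset.sum_congr rfl
    intro γ hγ
    rw [← Finset.mul_prod_erase Finset.univ _ (Finset.mem_univ P)]
    simp only [huudef, if_pos rfl]
    have hprod : (∏ j ∈ Finset.univ.erase P,
        (if j = P then ((s ^ (v P) : ℝ) : ℂ) * w else ((s ^ (v j) : ℝ) : ℂ) * cs j) ^ γ j)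
        = (((s : ℝ) : ℂ)) ^ (∑ j ∈ Finset.univ.erase P, v j * γ j) * Cs γ := by
      rw [hCsdef]
      rw [← Finset.prod_pow_eq_pow_sum, ← Finset.prod_mul_distrib]
      apply Finset.prod_congr rfl
      intro j hj
      rw [if_neg (Finset.ne_of_mem_erase hj)]
      rw [mul_pow]
      congr 1
      push_cast
      rw [← pow_mul]
    rw [hprod]
    have hmle : m ≤ L γ := hmin γ hγ
    have hLsplit := hsplit γ
    have hpow : (((s : ℝ) : ℂ)) ^ (v P * γ P) *
        ((s : ℝ) : ℂ) ^ (∑ j ∈ Finset.univ.erase P, v j * γ j)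
        = ((s : ℝ) : ℂ) ^ m * ((s : ℝ) : ℂ) ^ (L γ - m) := by
      rw [← pow_add, ← pow_add]
      congr 1
      omega
    calc a γ * ((((s ^ (v P) : ℝ) : ℂ) * w) ^ γ P *
          ((((s : ℝ) : ℂ)) ^ (∑ j ∈ Finset.univ.erase P, v j * γ j) * Cs γ))
        = (((s : ℝ) : ℂ) ^ (v P * γ P) *
            ((s : ℝ) : ℂ) ^ (∑ j ∈ Finset.univ.erase P, v j * γ j)) *
          (a γ * Cs γ * w ^ γ P) := by
          push_cast
          rw [mul_pow, ← pow_mul]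
          ring
      _ = (((s : ℝ) : ℂ) ^ m * ((s : ℝ) : ℂ) ^ (L γ - m)) * (a γ * Cs γ * w ^ γ P) := by
          rw [hpow]
      _ = ((s : ℝ) : ℂ) ^ m * (a γ * Cs γ * w ^ γ P * ((s : ℝ) : ℂ) ^ (L γ - m)) := by ring
  have hI2 : ∀ w : ℂ, Ψ 0 w = Q.eval w := by
    intro w
    simp only [hΨdef]
    rw [hQdef, Polynomial.eval_finset_sum]
    rw [← Finset.sum_filter_add_sum_filter_not p.support (fun γ => L γ = m)
      (fun γ => a γ * Cs γ * w ^ (γ P) * (((0 : ℝ) : ℂ)) ^ (L γ - m))]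
    have hzero : ∑ γ ∈ p.support.filter (fun γ => ¬ L γ = m),
        a γ * Cs γ * w ^ (γ P) * (((0 : ℝ) : ℂ)) ^ (L γ - m) = 0 := by
      apply Finset.sum_eq_zero
      intro γ hγ
      rw [Finset.mem_filter] at hγ
      have hmle : m ≤ L γ := hmin γ hγ.1
      have hne : L γ - m ≠ 0 := by omega
      rw [Complex.ofReal_zero, zero_pow hne, mul_zero]
    rw [hzero, add_zero]
    apply Finset.sum_congr rfl
    intro γ hγ
    rw [Finset.mem_filter] at hγ
    have : L γ - m = 0 := by omega
    rw [this, pow_zero, mul_one]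
    rw [Polynomial.eval_mul, Polynomial.eval_C, Polynomial.eval_pow, Polynomial.eval_X]
  set K : ℝ := ∑ γ ∈ p.support, ‖a γ * Cs γ‖ * (1 + W) ^ (γ P) with hKdef
  have hK0 : 0 ≤ K := by
    rw [hKdef]
    apply Finset.sum_nonneg
    intro γ hγ
    positivity
  have hI3 : ∀ s' : ℝ, 0 ≤ s' → s' ≤ 1 → ∀ w : ℂ, ‖w‖ ≤ W → ‖Ψ s' w - Ψ 0 w‖ ≤ s' * K := by
    intro s hs0 hs1 w hw
    simp only [hΨdef]
    rw [← Finset.sum_sub_distrib]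
    refine le_trans (norm_sum_le _ _) ?_
    rw [hKdef, Finset.mul_sum]
    apply Finset.sum_le_sum
    intro γ hγ
    have heq : a γ * Cs γ * w ^ γ P * ((s : ℝ) : ℂ) ^ (L γ - m)
        - a γ * Cs γ * w ^ γ P * (((0 : ℝ) : ℂ)) ^ (L γ - m)
        = (a γ * Cs γ) * w ^ γ P * (((s : ℝ) : ℂ) ^ (L γ - m) - (((0 : ℝ) : ℂ)) ^ (L γ - m)) := by
      ring
    rw [heq, norm_mul, norm_mul]
    have h1 : ‖w ^ γ P‖ ≤ (1 + W) ^ γ P := by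
      rw [norm_pow]
      exact pow_le_pow_left₀ (norm_nonneg _) (by linarith) _
    have h2 : ‖((s : ℝ) : ℂ) ^ (L γ - m) - (((0 : ℝ) : ℂ)) ^ (L γ - m)‖ ≤ s := by
      by_cases he : L γ - m = 0
      · rw [he, pow_zero, pow_zero, sub_self, norm_zero]
        exact hs0
      · rw [Complex.ofReal_zero, zero_pow he, sub_zero, norm_pow, Complex.norm_real,
          Real.norm_eq_abs, abs_of_nonneg hs0]
        calc s ^ (L γ - m) ≤ s ^ 1 := pow_le_pow_of_le_one hs0 hs1 (by omega)
          _ = s := pow_one s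
    calc ‖a γ * Cs γ‖ * ‖w ^ γ P‖ * ‖((s : ℝ) : ℂ) ^ (L γ - m) - (((0 : ℝ) : ℂ)) ^ (L γ - m)‖
        ≤ ‖a γ * Cs γ‖ * (1 + W) ^ γ P * s := by
          apply mul_le_mul
          · exact mul_le_mul_of_nonneg_left h1 (norm_nonneg _)
          · exact h2
          · exact norm_nonneg _
          · positivity
      _ = s * (‖a γ * Cs γ‖ * (1 + W) ^ γ P) := by ring
  clear_value K
  -- the size bound constant
  set CC : ℝ := (1 + W) + ∑ j, ‖cs j‖ with hCCdef
  have hCC1 : 1 + W ≤ CC := by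
    rw [hCCdef]
    have : (0:ℝ) ≤ ∑ j, ‖cs j‖ := Finset.sum_nonneg (fun j _ => norm_nonneg _)
    linarith
  have hCCcs : ∀ j : Fin d, ‖cs j‖ ≤ CC := by
    intro j
    rw [hCCdef]
    have h1 : ‖cs j‖ ≤ ∑ j', ‖cs j'‖ :=
      Finset.single_le_sum (fun j' _ => norm_nonneg (cs j')) (Finset.mem_univ j)
    linarith
  have hCC0 : 0 < CC := by linarith
  clear_value CC
  -- choose s
  set s : ℝ := min 1 (min (μ / (2 * (K + 1))) (δ / (2 * (CC + 1)))) with hsdef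
  have hs0 : 0 < s := by
    rw [hsdef]
    apply lt_min one_pos
    apply lt_min
    · exact div_pos hμpos (by linarith)
    · exact div_pos hδ (by linarith)
  have hs1 : s ≤ 1 := min_le_left _ _
  have hsK : s * K < μ / 2 := by
    have h1 : s ≤ μ / (2 * (K + 1)) := le_trans (min_le_right _ _) (min_le_left _ _)
    have h2 : s * K ≤ μ / (2 * (K + 1)) * K := mul_le_mul_of_nonneg_right h1 hK0
    have h3 : μ / (2 * (K + 1)) * K < μ / 2 := by
      rw [div_mul_eq_mul_div, div_lt_div_iff₀ (by linarith) (by norm_num)]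
      nlinarith
    linarith
  have hsCC : s * CC < δ := by
    have h1 : s ≤ δ / (2 * (CC + 1)) := le_trans (min_le_right _ _) (min_le_right _ _)
    have h2 : s * CC ≤ δ / (2 * (CC + 1)) * CC :=
      mul_le_mul_of_nonneg_right h1 (le_of_lt hCC0)
    have h3 : δ / (2 * (CC + 1)) * CC < δ := by
      rw [div_mul_eq_mul_div, div_lt_iff₀ (by linarith)]
      nlinarith
    linarith
  -- minimum modulus on the perturbed function
  have hΨdiff : Differentiable ℂ (fun w => Ψ s w) := by
    simp only [hΨdef]
    apply Differentiable.fun_sum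
    intro γ hγ
    exact ((differentiable_pow (γ P)).const_mul (a γ * Cs γ)).mul_const _
  have hWsph : ∀ w ∈ Metric.sphere wstar r, ‖w‖ ≤ W :=
    fun w hw => hWball w (Metric.sphere_subset_closedBall hw)
  have hsph_bound : ∀ w ∈ Metric.sphere wstar r, μ / 2 ≤ ‖Ψ s w‖ := by
    intro w hw
    have h1 : μ ≤ ‖Q.eval w‖ := hμsph w hw
    have h2 : ‖Ψ s w - Ψ 0 w‖ ≤ s * K := hI3 s (le_of_lt hs0) hs1 w (hWsph w hw)
    have h3 : ‖Ψ 0 w‖ = ‖Q.eval w‖ := by rw [hI2]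
    have h4 : ‖Ψ 0 w‖ - ‖Ψ s w‖ ≤ ‖Ψ s w - Ψ 0 w‖ := by
      have := norm_sub_norm_le (Ψ 0 w) (Ψ s w)
      rw [← norm_neg (Ψ 0 w - Ψ s w), neg_sub] at this
      linarith
    linarith
  have hcenter : ‖Ψ s wstar‖ < μ / 2 := by
    have h2 : ‖Ψ s wstar - Ψ 0 wstar‖ ≤ s * K := hI3 s (le_of_lt hs0) hs1 wstar hWstar_le
    have h3 : Ψ 0 wstar = 0 := by rw [hI2]; exact hQwstar0
    rw [h3, sub_zero] at h2
    linarith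
  obtain ⟨what, hwhat_mem, hwhat0⟩ :=
    exists_zero_of_min_modulus hΨdiff hr0 hsph_bound hcenter
  -- the zero point of p
  obtain ⟨hwhat_ne, hwhat_arg⟩ := hball_cone hwhat_mem
  have hwhatW : ‖what‖ ≤ W := hWball what hwhat_mem
  have heval0 : MvPolynomial.eval (uu s what) p = 0 := by
    rw [hI1, hwhat0, mul_zero]
  -- generic facts about powers of s
  have hspow_pos : ∀ n : ℕ, (0 : ℝ) < s ^ n := fun n => pow_pos hs0 n
  have hspow_le : ∀ j : Fin d, s ^ (v j) ≤ s := by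
    intro j
    calc s ^ (v j) ≤ s ^ 1 := pow_le_pow_of_le_one (le_of_lt hs0) hs1 (hv1 j)
      _ = s := pow_one s
  have hσpow : ∀ n : ℕ, σ ^ n = Complex.exp (((θ * n : ℝ) : ℂ) * Complex.I) := by
    intro n
    rw [hσdef, ← Complex.exp_nat_mul]
    congr 1
    push_cast
    ring
  -- norms of the coordinates
  have hcs_norm : ∀ j : Fin d, ‖uu s what j‖ ≤ s * CC := by
    intro j
    by_cases hj : j = P
    · subst hj
      simp only [huudef, if_pos]
      rw [norm_mul, Complex.norm_real, Real.norm_eq_abs, abs_of_pos (hspow_pos _)]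
      exact mul_le_mul (hspow_le j) (le_trans hwhatW (by linarith)) (norm_nonneg _)
        (le_of_lt hs0)
    · simp only [huudef, if_neg hj]
      rw [norm_mul, Complex.norm_real, Real.norm_eq_abs, abs_of_pos (hspow_pos _)]
      exact mul_le_mul (hspow_le j) (hCCcs j) (norm_nonneg _) (le_of_lt hs0)
  -- the coordinates are in the cone
  have hcs_arg : ∀ j : Fin d, uu s what j ≠ 0 ∧
      |Complex.arg (uu s what j)| < Real.pi / 2 + δ := by
    intro j
    by_cases hj : j = P
    · subst hj
      constructor
      · simp only [huudef, if_pos]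
        exact mul_ne_zero (by
          simp only [ne_eq, Complex.ofReal_eq_zero]
          exact ne_of_gt (hspow_pos _)) hwhat_ne
      · simp only [huudef, if_pos]
        rw [Complex.arg_real_mul what (hspow_pos _)]
        exact hwhat_arg
    · have hcsj : cs j = ((c j : ℝ) : ℂ) *
          (Complex.cos ((θ * v j : ℝ) : ℂ) + Complex.sin ((θ * v j : ℝ) : ℂ) * Complex.I) := by
        rw [hcsdef]
        simp only
        rw [hσpow (v j), ← Complex.exp_mul_I]
        ring
      have hIoc : θ * (v j : ℝ) ∈ Set.Ioc (-Real.pi) Real.pi := by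
        have := hθbound j
        have hpi := Real.pi_pos
        constructor
        · rw [abs_le] at this; linarith [this.1]
        · rw [abs_le] at this; linarith [this.2]
      have hargcs : Complex.arg (cs j) = θ * (v j : ℝ) := by
        rw [hcsj]
        exact Complex.arg_mul_cos_add_sin_mul_I (hcpos j) hIoc
      constructor
      · simp only [huudef, if_neg hj]
        apply mul_ne_zero
        · simp only [ne_eq, Complex.ofReal_eq_zero]
          exact ne_of_gt (hspow_pos _)
        · rw [hcsdef]
          simp only
          apply mul_ne_zero (pow_ne_zero _ hσne)
          simp only [ne_eq, Complex.ofReal_eq_zero]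
          exact ne_of_gt (hcpos j)
      · simp only [huudef, if_neg hj]
        rw [Complex.arg_real_mul (cs j) (hspow_pos _)]
        rw [hargcs]
        have := hθbound j
        have hpi := Real.pi_pos
        calc |θ * (v j : ℝ)| ≤ Real.pi / 2 := this
          _ < Real.pi / 2 + δ := by linarith
  -- the point in the Delta domain
  set z : Fin d → ℂ := fun j => 1 - uu s what j with hzdef
  have hzmem : z ∈ DeltaDomD d δ := by
    intro j
    obtain ⟨hne0, harg⟩ := hcs_arg j
    have hsize : ‖uu s what j‖ < δ := lt_of_le_of_lt (hcs_norm j) hsCC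
    refine ⟨?_, ?_, ?_⟩
    · simp only [hzdef]
      calc ‖1 - uu s what j‖ ≤ ‖(1 : ℂ)‖ + ‖uu s what j‖ := norm_sub_le _ _
        _ = 1 + ‖uu s what j‖ := by rw [norm_one]
        _ < 1 + δ := by linarith
    · simp only [hzdef]
      intro h1
      rw [sub_eq_self] at h1
      exact hne0 h1
    · simp only [hzdef]
      rw [sub_sub_cancel]
      exact harg
  apply hGne z hzmem
  rw [hzdef, ← hpu (uu s what)]
  exact heval0

end ACSV
end
end

section
/- Let d ≥ 1, θ0 ∈ ℝ, θ ∈ (0,∞)^d, and let K ⊆ (ℂ∖{0})^d be a set closed under the scalings u ↦ (σ^{θ_1}u_1,…,σ^{θ_d}u_d) for every σ > 0. Let H : K → ℂ be (θ0,θ)-homogeneous and of polynomial type locally at 0, i.e. there exist ε, C, M > 0 with |H(u)| ≤ C·Σ_{j=1}^d |u_j|^{−M} for all u ∈ K with |u_j| < ε for every j. Then there exist a constant C' > 0 and finitely many vectors α^{(1)},…,α^{(N)} ∈ ℝ^d with Σ_{j=1}^d α^{(k)}_j θ_j = θ0 for every k, such that |H(u)| ≤ C'·Σ_{k=1}^N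 Π_{j=1}^d |u_j|^{α^{(k)}_j} for all u ∈ K. -/
open MeasureTheory Real Set

noncomputable section

namespace ACSV

/-- a homogeneous function of polynomial type locally at `0` is
bounded by finitely many monomials globally. -/
theorem stmt16 (d : ℕ) (hd : 1 ≤ d) (θ0 : ℝ) (θ : Fin d → ℝ) (hθ : ∀ j, 0 < θ j)
    (K : Set (Fin d → ℂ)) (hK0 : ∀ u ∈ K, ∀ j, u j ≠ 0)
    (hKscale : ∀ u ∈ K, ∀ σ : ℝ, 0 < σ → (fun j => ((σ ^ θ j : ℝ) : ℂ) * u j) ∈ K)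
    (H : (Fin d → ℂ) → ℂ) (hhom : Homog d K θ0 θ H)
    (hloc : ∃ ε : ℝ, 0 < ε ∧ ∃ C : ℝ, 0 < C ∧ ∃ M : ℝ, 0 < M ∧
      ∀ u ∈ K, (∀ j, ‖u j‖ < ε) →
        ‖H u‖ ≤ C * ∑ j, ‖u j‖ ^ (-M)) :
    ∃ C' : ℝ, 0 < C' ∧ ∃ N : ℕ, ∃ α : Fin N → Fin d → ℝ,
      (∀ k, ∑ j, α k j * θ j = θ0) ∧
      ∀ u ∈ K, ‖H u‖ ≤ C' * ∑ k, ∏ j, ‖u j‖ ^ α k j := by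
  obtain ⟨ε, hε, C, hC, M, hM, hb⟩ := hloc
  have hne : Nonempty (Fin d) := ⟨⟨0, hd⟩⟩
  set η := ε / 2 with hηdef
  have hη0 : 0 < η := by positivity
  -- exponent vectors indexed by pairs
  set f : Fin d × Fin d → Fin d → ℝ := fun p l =>
    (if l = p.1 then (θ0 + M * θ p.2) / θ p.1 else 0) + (if l = p.2 then -M else 0)
    with hfdef
  -- constants
  set c : Fin d × Fin d → ℝ := fun p => η ^ (-((θ0 + M * θ p.2) / θ p.1)) with hcdef
  have hcpos : ∀ p, 0 < c p := fun p => Real.rpow_pos_of_pos hη0 _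
  set S : ℝ := ∑ p : Fin d × Fin d, c p with hSdef
  have hSpos : 0 < S :=
    Finset.sum_pos (fun p _ => hcpos p) Finset.univ_nonempty
  have hCS : 0 < C * S := by positivity
  refine ⟨C * S, hCS, d * d, fun k => f (finProdFinEquiv.symm k), ?_, ?_⟩
  · intro k
    set p := finProdFinEquiv.symm k
    have : ∑ j, f p j * θ j =
        ((θ0 + M * θ p.2) / θ p.1) * θ p.1 + (-M) * θ p.2 := by
      simp only [hfdef, add_mul, Finset.sum_add_distrib, ite_mul, zero_mul]
      rw [Finset.sum_ite_eq' Finset.univ p.1 (fun l => (θ0 + M * θ p.2) / θ p.1 * θ l),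
        Finset.sum_ite_eq' Finset.univ p.2 (fun l => -M * θ l)]
      simp
    rw [this, div_mul_cancel₀ _ (hθ p.1).ne']
    ring
  · intro u hu
    set r : Fin d → ℝ := fun j => ‖u j‖ with hrdef
    have hr : ∀ j, 0 < r j := fun j => by
      simpa [hrdef] using (norm_pos_iff.mpr (hK0 u hu j))
    set t : Fin d → ℝ := fun j => (η / r j) ^ (1 / θ j) with htdef
    have ht : ∀ j, 0 < t j := fun j =>
      Real.rpow_pos_of_pos (div_pos hη0 (hr j)) _
    obtain ⟨i, -, hi⟩ := Finset.exists_min_image Finset.univ t Finset.univ_nonempty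
    set σ := t i with hσdef
    have hσ : 0 < σ := ht i
    -- σ^a in terms of η and r i
    have hσpow : ∀ a : ℝ, σ ^ a = η ^ (a / θ i) * r i ^ (-(a / θ i)) := by
      intro a
      have h1 : σ ^ a = (η / r i) ^ (a / θ i) := by
        rw [hσdef, htdef, ← Real.rpow_mul (div_pos hη0 (hr i)).le]
        congr 1
        field_simp
      rw [h1, Real.div_rpow hη0.le (hr i).le, Real.rpow_neg (hr i).le,
        div_eq_mul_inv]
    -- the scaled point lies in the small region
    have hkey : ∀ j, σ ^ θ j * r j ≤ η := by
      intro j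
      have h1 : σ ^ θ j ≤ t j ^ θ j :=
        Real.rpow_le_rpow hσ.le (hi j (Finset.mem_univ j)) (hθ j).le
      have h2 : t j ^ θ j = η / r j := by
        rw [htdef, ← Real.rpow_mul (div_pos hη0 (hr j)).le,
          one_div, inv_mul_cancel₀ (hθ j).ne', Real.rpow_one]
      calc σ ^ θ j * r j ≤ (η / r j) * r j := by
            rw [← h2]; exact mul_le_mul_of_nonneg_right h1 (hr j).le
        _ = η := div_mul_cancel₀ _ (hr j).ne'
    set v : Fin d → ℂ := fun j => ((σ ^ θ j : ℝ) : ℂ) * u j with hvdef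
    have hvK : v ∈ K := hKscale u hu σ hσ
    have hvabs : ∀ j, ‖v j‖ = σ ^ θ j * r j := by
      intro j
      rw [hvdef]
      simp only [hrdef, norm_mul, Complex.norm_real, Real.norm_eq_abs,
        abs_of_pos (Real.rpow_pos_of_pos hσ (θ j))]
    have hvsmall : ∀ j, ‖v j‖ < ε := by
      intro j
      rw [hvabs j]
      calc σ ^ θ j * r j ≤ η := hkey j
        _ < ε := by rw [hηdef]; linarith
    have hbnd := hb v hvK hvsmall
    have hhv : ‖H v‖ = σ ^ θ0 * ‖H u‖ := by
      rw [hvdef, hhom u hu σ hσ]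
      simp [abs_of_pos (Real.rpow_pos_of_pos hσ θ0)]
    -- rewrite the local bound
    have hbnd2 : ‖H u‖ ≤
        σ ^ (-θ0) * (C * ∑ j, (σ ^ θ j * r j) ^ (-M)) := by
      have hσθ : (0:ℝ) < σ ^ θ0 := Real.rpow_pos_of_pos hσ θ0
      have h1 : ‖H u‖ = σ ^ (-θ0) * ‖H v‖ := by
        rw [hhv, ← mul_assoc, Real.rpow_neg hσ.le, inv_mul_cancel₀ hσθ.ne', one_mul]
      rw [h1]
      have h2 : (∑ j, ‖v j‖ ^ (-M)) = ∑ j, (σ ^ θ j * r j) ^ (-M) := by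
        exact Finset.sum_congr rfl fun j _ => by rw [hvabs j]
      have := hbnd
      rw [h2] at this
      exact mul_le_mul_of_nonneg_left this (Real.rpow_nonneg hσ.le _)
    -- monomials
    have hmono : ∀ p : Fin d × Fin d, (∏ l, r l ^ f p l) =
        r p.1 ^ ((θ0 + M * θ p.2) / θ p.1) * r p.2 ^ (-M) := by
      intro p
      have : (∏ l, r l ^ f p l) =
          (∏ l, if l = p.1 then r l ^ ((θ0 + M * θ p.2) / θ p.1) else 1) *
          (∏ l, if l = p.2 then r l ^ (-M) else 1) := by
        rw [← Finset.prod_mul_distrib]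
        refine Finset.prod_congr rfl fun l _ => ?_
        rw [hfdef]
        simp only
        rw [Real.rpow_add (hr l)]
        congr 1 <;> split_ifs <;> simp
      rw [this, Finset.prod_ite_eq' Finset.univ p.1
          (fun l => r l ^ ((θ0 + M * θ p.2) / θ p.1)),
        Finset.prod_ite_eq' Finset.univ p.2 (fun l => r l ^ (-M))]
      simp
    have hmono_nonneg : ∀ p : Fin d × Fin d, 0 ≤ ∏ l, r l ^ f p l :=
      fun p => Finset.prod_nonneg fun l _ => Real.rpow_nonneg (hr l).le _
    -- per-term identity
    have hterm : ∀ j, σ ^ (-θ0) * (σ ^ θ j * r j) ^ (-M) =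
        c (i, j) * ∏ l, r l ^ f (i, j) l := by
      intro j
      rw [hmono (i, j)]
      have h1 : (σ ^ θ j * r j) ^ (-M) = σ ^ (θ j * (-M)) * r j ^ (-M) := by
        rw [Real.mul_rpow (Real.rpow_pos_of_pos hσ _).le (hr j).le,
          ← Real.rpow_mul hσ.le]
      rw [h1, ← mul_assoc, ← Real.rpow_add hσ]
      have ha : -θ0 + θ j * (-M) = -(θ0 + M * θ j) := by ring
      rw [ha, hσpow (-(θ0 + M * θ j))]
      have hb1 : -(θ0 + M * θ j) / θ i = -((θ0 + M * θ j) / θ i) := by ring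
      rw [hb1, neg_neg]
      simp only [hcdef]
      ring
    -- conclude
    have hsum : σ ^ (-θ0) * (C * ∑ j, (σ ^ θ j * r j) ^ (-M)) =
        C * ∑ j, c (i, j) * ∏ l, r l ^ f (i, j) l := by
      rw [Finset.mul_sum, Finset.mul_sum, Finset.mul_sum]
      refine Finset.sum_congr rfl fun j _ => ?_
      rw [← hterm j]
      ring
    calc ‖H u‖
        ≤ σ ^ (-θ0) * (C * ∑ j, (σ ^ θ j * r j) ^ (-M)) := hbnd2
      _ = C * ∑ j, c (i, j) * ∏ l, r l ^ f (i, j) l := hsum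
      _ ≤ C * ∑ j, S * ∏ l, r l ^ f (i, j) l := by
          refine mul_le_mul_of_nonneg_left (Finset.sum_le_sum fun j _ => ?_) hC.le
          exact mul_le_mul_of_nonneg_right
            (Finset.single_le_sum (fun p _ => (hcpos p).le) (Finset.mem_univ (i, j)))
            (hmono_nonneg (i, j))
      _ = (C * S) * ∑ j, ∏ l, r l ^ f (i, j) l := by
          rw [← Finset.mul_sum]; ring
      _ ≤ (C * S) * ∑ p : Fin d × Fin d, ∏ l, r l ^ f p l := by
          refine mul_le_mul_of_nonneg_left ?_ hCS.le
          rw [Fintype.sum_prod_type]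
          exact Finset.single_le_sum
            (fun i' _ => Finset.sum_nonneg fun j _ => hmono_nonneg (i', j))
            (Finset.mem_univ i)
      _ = (C * S) * ∑ k : Fin (d * d), ∏ l, r l ^ f (finProdFinEquiv.symm k) l := by
          rw [Equiv.sum_comp finProdFinEquiv.symm
            (fun p => ∏ l, r l ^ f p l)]

end ACSV
end
end

section
/- Let d ≥ 1, δ > 0, and let A be an analytic function on the product Δ-domain Δ_δ^d which is algebraic, i.e. there exists a nonzero polynomial E ∈ ℂ[w, z_1, …, z_d] such that E(A(z), z_1, …, z_d) = 0 for all z ∈ Δ_δ^d. Then for every δ' ∈ (0,δ), A is of polynomial type on Δ_{δ'}^d: there exist C, M > 0 such that |A(z)| ≤ C·Σ_{j=1}^d |z_j − 1|^{−M} for all z ∈ Δ_{δ'}^d. -/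
open MeasureTheory Real Set

noncomputable section

namespace ACSV

open Metric Complex Real


/-- Removing one linear factor: max modulus trick. -/
lemma step_one {ρ C : ℝ} (hρ : 0 < ρ) (c : ℂ) {h : ℂ → ℂ}
    (hd : DifferentiableOn ℂ h (ball (0:ℂ) ρ))
    (hb : ∀ t ∈ ball (0:ℂ) ρ, ‖(t - c) * h t‖ ≤ C) :
    ∀ t ∈ ball (0:ℂ) (ρ/2), ‖h t‖ ≤ 8 * C / ρ := by
  have hC : 0 ≤ C := le_trans (norm_nonneg _) (hb 0 (by simp [hρ]))
  intro t ht
  by_cases hc : ‖t - c‖ ≥ ρ/8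
  · have h1 : t ∈ ball (0:ℂ) ρ := by
      rw [mem_ball, dist_zero_right] at ht ⊢; calc ‖t‖ < ρ/2 := ht
        _ ≤ ρ := by linarith
    have h2 := hb t h1
    rw [norm_mul] at h2
    have h3 : (ρ/8) * ‖h t‖ ≤ C := by
      nlinarith [norm_nonneg (h t)]
    rw [le_div_iff₀ hρ]
    nlinarith [norm_nonneg (h t)]
  · push_neg at hc
    have ht' : ‖t‖ < ρ/2 := by simpa [mem_ball, dist_zero_right] using ht
    have hcb : ‖c‖ < 5*ρ/8 := by
      have : ‖c‖ ≤ ‖t‖ + ‖t - c‖ := by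
        calc ‖c‖ = ‖t - (t - c)‖ := by ring_nf
          _ ≤ ‖t‖ + ‖t - c‖ := by
            simpa [norm_sub_rev] using norm_add_le t (-(t - c))
      linarith
    -- max modulus on U = ball 0 (7ρ/8)
    set U : Set ℂ := ball (0:ℂ) (7*ρ/8) with hU
    have hsub : closure U ⊆ ball (0:ℂ) ρ := by
      rw [hU, closure_ball (0:ℂ) (by positivity : (7*ρ/8:ℝ) ≠ 0)]
      intro x hx
      rw [mem_closedBall, dist_zero_right] at hx
      rw [mem_ball, dist_zero_right]
      linarith
    have hdc : DiffContOnCl ℂ h U := by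
      refine ⟨hd.mono ?_, (hd.continuousOn).mono hsub⟩
      exact subset_trans subset_closure hsub
    have hfront : ∀ s ∈ frontier U, ‖h s‖ ≤ 8 * C / ρ := by
      intro s hs
      rw [hU, frontier_ball (0:ℂ) (by positivity : (7*ρ/8:ℝ) ≠ 0), mem_sphere,
        dist_zero_right] at hs
      have hsball : s ∈ ball (0:ℂ) ρ := by
        rw [mem_ball, dist_zero_right]; rw [hs]; linarith
      have h2 := hb s hsball
      rw [norm_mul] at h2
      have hsc : ρ/4 ≤ ‖s - c‖ := by
        have : ‖s‖ - ‖c‖ ≤ ‖s - c‖ :=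
          norm_sub_norm_le s c
        have hs' : ‖s‖ = 7*ρ/8 := hs
        linarith
      have h4 : (ρ/4) * ‖h s‖ ≤ C := by
        nlinarith [norm_nonneg (h s)]
      show ‖h s‖ ≤ 8 * C / ρ
      rw [le_div_iff₀ hρ]
      nlinarith [norm_nonneg (h s)]
    have hmem : t ∈ closure U := subset_closure (by
      rw [hU, mem_ball, dist_zero_right]; calc ‖t‖ < ρ/2 := ht'
        _ ≤ 7*ρ/8 := by linarith)
    exact Complex.norm_le_of_forall_mem_frontier_norm_le isBounded_ball hdc hfront hmem

/-- Iterated factor removal. -/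
lemma multi_step {C : ℝ} (hC : 0 ≤ C) (s : Multiset ℂ) :
    ∀ (ρ : ℝ), 0 < ρ → ρ ≤ 1 → ∀ h : ℂ → ℂ,
    DifferentiableOn ℂ h (ball (0:ℂ) ρ) →
    (∀ t ∈ ball (0:ℂ) ρ, ‖(s.map (fun c => t - c)).prod * h t‖ ≤ C) →
    ∀ t ∈ ball (0:ℂ) (ρ / 2 ^ Multiset.card s),
      ‖h t‖ ≤ C * (16 / ρ) ^ (Multiset.card s ^ 2) := by
  induction s using Multiset.induction_on with
  | empty =>
    intro ρ hρ hρ1 h hd hb t ht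
    simpa using hb t (by simpa using ht)
  | cons c s ih =>
    intro ρ hρ hρ1 h hd hb t ht
    set n := Multiset.card s with hn
    have hcard : Multiset.card (c ::ₘ s) = n + 1 := by simp [hn]
    -- auxiliary function
    set h₁ : ℂ → ℂ := fun t => (t - c) * h t with hh₁
    have hd₁ : DifferentiableOn ℂ h₁ (ball (0:ℂ) ρ) := by
      apply DifferentiableOn.mul _ hd
      exact (differentiable_id.sub_const c).differentiableOn
    have hb₁ : ∀ t ∈ ball (0:ℂ) ρ, ‖(s.map (fun c => t - c)).prod * h₁ t‖ ≤ C := by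
      intro t ht
      have hC1 := hb t ht
      rw [Multiset.map_cons, Multiset.prod_cons] at hC1
      have heq : (s.map (fun c => t - c)).prod * h₁ t
          = (t - c) * (s.map (fun c => t - c)).prod * h t := by
        simp only [hh₁]; ring
      rw [heq]; exact hC1
    have ih' := ih ρ hρ hρ1 h₁ hd₁ hb₁
    -- now apply step_one on ball of radius ρ/2^n
    set ρ₁ : ℝ := ρ / 2 ^ n with hρ₁
    have hρ₁pos : 0 < ρ₁ := by positivity
    have hstep := step_one (C := C * (16 / ρ) ^ (n ^ 2)) hρ₁pos c
      (hd.mono (ball_subset_ball (by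
        rw [hρ₁]
        calc ρ / 2^n ≤ ρ / 1 := by
              apply div_le_div_of_nonneg_left hρ.le one_pos
              exact_mod_cast Nat.one_le_two_pow
          _ = ρ := by ring)))
      (fun t ht => ih' t ht)
    have ht' : t ∈ ball (0:ℂ) (ρ₁ / 2) := by
      rw [hρ₁]
      have : ρ / 2 ^ Multiset.card (c ::ₘ s) = ρ / 2 ^ n / 2 := by
        rw [hcard]; ring
      rwa [this] at ht
    have hfin := hstep t ht'
    refine hfin.trans ?_
    -- arithmetic: 8 * (C * (16/ρ)^(n^2)) / ρ₁ ≤ C * (16/ρ)^((n+1)^2)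
    rw [hcard]
    have h16 : (1:ℝ) ≤ 16 / ρ := by
      rw [le_div_iff₀ hρ]; linarith
    have key : (8:ℝ) * 2 ^ n / ρ ≤ (16 / ρ) ^ (2 * n + 1) := by
      have h1 : (8:ℝ) * 2 ^ n ≤ 16 ^ (2 * n + 1) := by
        calc (8:ℝ) * 2 ^ n ≤ 16 * 16 ^ n := by
              have : (2:ℝ)^n ≤ 16^n := pow_le_pow_left₀ (by norm_num) (by norm_num) n
              nlinarith [pow_nonneg (by norm_num : (0:ℝ) ≤ 2) n]
          _ = 16 ^ (n+1) := by rw [pow_succ]; ring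
          _ ≤ 16 ^ (2*n+1) := pow_le_pow_right₀ (by norm_num) (by omega)
      calc (8:ℝ) * 2 ^ n / ρ = (8 * 2 ^ n) * (1/ρ) := by ring
        _ ≤ 16 ^ (2*n+1) * (1/ρ) := by
            apply mul_le_mul_of_nonneg_right h1
            positivity
        _ ≤ (16/ρ) ^ (2*n+1) := by
            rw [div_pow, mul_one_div, div_le_div_iff₀ hρ (by positivity)]
            have hρpow : ρ ^ (2*n+1) ≤ ρ := by
              calc ρ ^ (2*n+1) ≤ ρ ^ 1 := pow_le_pow_of_le_one hρ.le hρ1 (by omega)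
                _ = ρ := pow_one ρ
            exact mul_le_mul_of_nonneg_left hρpow (by positivity)
    calc 8 * (C * (16 / ρ) ^ n ^ 2) / ρ₁
        = C * (16/ρ)^(n^2) * (8 * 2^n / ρ) := by rw [hρ₁]; field_simp
      _ ≤ C * (16/ρ)^(n^2) * (16/ρ)^(2*n+1) := by
          apply mul_le_mul_of_nonneg_left key
          positivity
      _ = C * (16/ρ)^(n^2 + (2*n+1)) := by rw [pow_add]; ring
      _ = C * (16/ρ)^((n+1)^2) := by ring_nf





lemma abs_arg_lt_iff {x : ℂ} (hx : x ≠ 0) {b : ℝ} (hb0 : 0 < b) (hbπ : b ≤ Real.pi) :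
    |Complex.arg x| < b ↔ ‖x‖ * Real.cos b < x.re := by
  have habs : 0 < ‖x‖ := norm_pos_iff.mpr hx
  have hre : x.re = ‖x‖ * Real.cos (Complex.arg x) := by
    rw [Complex.cos_arg hx]; field_simp
  have hargmem : |Complex.arg x| ∈ Set.Icc 0 Real.pi :=
    ⟨abs_nonneg _, Complex.abs_arg_le_pi x⟩
  have hbmem : b ∈ Set.Icc 0 Real.pi := ⟨hb0.le, hbπ⟩
  constructor
  · intro h
    have : Real.cos b < Real.cos |Complex.arg x| :=
      Real.strictAntiOn_cos hargmem hbmem h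
    rw [Real.cos_abs] at this
    rw [hre]
    exact (mul_lt_mul_iff_right₀ habs).mpr this
  · intro h
    rw [hre] at h
    have hcos : Real.cos b < Real.cos |Complex.arg x| := by
      rw [Real.cos_abs]; exact (mul_lt_mul_iff_right₀ habs).mp h
    by_contra hcon
    push_neg at hcon
    rcases eq_or_lt_of_le hcon with h1 | h1
    · rw [← h1] at hcos; exact lt_irrefl _ hcos
    · have := Real.strictAntiOn_cos hbmem hargmem h1
      linarith

lemma re_abs_chain {u u' : ℂ} {ε ca cb : ℝ} (hu : u ≠ 0)
    (hd : ‖u' - u‖ ≤ ε * ‖u‖)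
    (hcb1 : -1 ≤ cb) (hcb0 : cb ≤ 0) (hgap : 2 * ε ≤ ca - cb)
    (ha : ‖u‖ * ca < u.re) :
    ‖u'‖ * cb < u'.re := by
  have hr : 0 < ‖u‖ := norm_pos_iff.mpr hu
  obtain ⟨r, hr_def⟩ : ∃ r : ℝ, r = ‖u‖ := ⟨_, rfl⟩
  obtain ⟨r', hr'_def⟩ : ∃ r' : ℝ, r' = ‖u'‖ := ⟨_, rfl⟩
  obtain ⟨dd, hd_def⟩ : ∃ dd : ℝ, dd = ‖u' - u‖ := ⟨_, rfl⟩
  have hεnn : 0 ≤ ε := by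
    by_contra hneg
    push_neg at hneg
    have h0 : ‖u' - u‖ ≥ 0 := norm_nonneg _
    nlinarith
  have h1 : r - dd ≤ r' := by
    rw [hr_def, hr'_def, hd_def]
    have h2 := norm_sub_norm_le u u'
    rw [norm_sub_rev u u'] at h2
    linarith
  have h2 : r' ≤ r + dd := by
    rw [hr_def, hr'_def, hd_def]
    have h3 := norm_add_le u (u' - u)
    have h4 : u + (u' - u) = u' := by ring
    rw [h4] at h3
    linarith
  have h5 : dd ≤ ε * r := by rw [hd_def, hr_def]; exact hd
  have h6 : u.re - dd ≤ u'.re := by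
    have h7 : |(u' - u).re| ≤ ‖u' - u‖ := Complex.abs_re_le_norm _
    have h8 : u'.re = u.re + (u' - u).re := by simp
    rw [hd_def]
    have := (abs_le.mp h7).1
    linarith
  have hrpos : 0 < r := by rw [hr_def]; exact hr
  -- r' * cb ≤ (r - ε r) * cb  ≤ r * cb + ε * r
  have h9 : r' * cb ≤ (1 - ε) * r * cb := by
    have : (1 - ε) * r ≤ r' := by nlinarith
    nlinarith
  have h10 : (1 - ε) * r * cb ≤ r * cb + ε * r := by nlinarith
  have hfin : r' * cb < u'.re := by
    have ha' : r * ca < u.re := by rw [hr_def]; exact ha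
    nlinarith
  rw [← hr'_def]; exact hfin

lemma delta_geom {δ δ' : ℝ} (hδ' : 0 < δ') (hlt : δ' < δ) :
    ∃ ε : ℝ, 0 < ε ∧ ε ≤ 1/2 ∧ ∀ z ∈ DeltaDom δ', ∀ w : ℂ,
      ‖w - z‖ ≤ ε * min 1 (‖z - 1‖) → w ∈ DeltaDom δ := by
  classical
  set θgap : ℝ := if δ ≤ Real.pi/2 then
      (Real.cos (Real.pi/2 + δ') - Real.cos (Real.pi/2 + δ))/2 else 1 with hθ
  have hθpos : 0 < θgap := by
    rw [hθ]
    split_ifs with hcase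
    · have h1 : Real.cos (Real.pi/2 + δ) < Real.cos (Real.pi/2 + δ') := by
        apply Real.strictAntiOn_cos
        · constructor <;> nlinarith [Real.pi_pos]
        · constructor <;> nlinarith [Real.pi_pos]
        · linarith
      linarith
    · norm_num
  have hδδ' : 0 < (δ - δ')/2 := by linarith
  refine ⟨min (min ((δ - δ')/2) (1/2)) θgap,
    lt_min (lt_min hδδ' (by norm_num)) hθpos,
    le_trans (min_le_left _ _) (min_le_right _ _), ?_⟩
  set ε := min (min ((δ - δ')/2) (1/2)) θgap with hε
  have hε1 : ε ≤ (δ - δ')/2 := le_trans (min_le_left _ _) (min_le_left _ _)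
  have hε2 : ε ≤ 1/2 := le_trans (min_le_left _ _) (min_le_right _ _)
  have hε3 : ε ≤ θgap := min_le_right _ _
  have hεpos : 0 < ε := lt_min (lt_min hδδ' (by norm_num)) hθpos
  intro z hz w hw
  obtain ⟨hz1, hz2, hz3⟩ := hz
  have hzd : 0 < ‖z - 1‖ := by
    rw [norm_pos_iff, sub_ne_zero]; exact hz2
  have hmin_le_one : min 1 (‖z - 1‖) ≤ 1 := min_le_left _ _
  have hmin_le : min 1 (‖z - 1‖) ≤ ‖z - 1‖ := min_le_right _ _
  have hw1 : ‖w - z‖ ≤ ε := le_trans hw (by nlinarith)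
  have hw2 : ‖w - z‖ ≤ ε * ‖z - 1‖ := le_trans hw (by nlinarith)
  have hwz1 : ‖w - 1‖ > 0 := by
    have h2 : ‖z - 1‖ - ‖z - 1‖ * ε ≤ ‖w - 1‖ := by
      have h3 := norm_sub_norm_le (z - 1) (w - 1)
      have h4 : (z - 1) - (w - 1) = -(w - z) := by ring
      rw [h4, norm_neg] at h3
      nlinarith
    nlinarith
  refine ⟨?_, ?_, ?_⟩
  · have htri : ‖w‖ ≤ ‖z‖ + ‖w - z‖ := by
      have h3 := norm_add_le z (w - z)
      have h4 : z + (w - z) = w := by ring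
      rw [h4] at h3; exact h3
    have hz1' : ‖z‖ < 1 + δ' := hz1
    linarith
  · intro hw1eq
    rw [hw1eq] at hwz1
    simp at hwz1
  · by_cases hcase : δ ≤ Real.pi/2
    · have hδ'2 : δ' < Real.pi/2 := lt_of_lt_of_le hlt hcase
      have hune : (1 - z : ℂ) ≠ 0 := by
        rw [sub_ne_zero]; exact fun h => hz2 h.symm
      have hu'ne : (1 - w : ℂ) ≠ 0 := by
        rw [sub_ne_zero]
        intro h
        rw [← h] at hwz1
        simp at hwz1
      have hπ : 0 < Real.pi := Real.pi_pos
      have ha : ‖1 - z‖ * Real.cos (Real.pi/2 + δ') < (1 - z : ℂ).re :=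
        (abs_arg_lt_iff hune (by linarith) (by linarith)).mp hz3
      have hd : ‖(1 - w) - (1 - z)‖ ≤ ε * ‖1 - z‖ := by
        have h4 : (1 - w) - (1 - z) = -(w - z) := by ring
        rw [h4, norm_neg]
        have h5 : ‖z - 1‖ = ‖1 - z‖ := norm_sub_rev _ _
        rw [← h5]; exact hw2
      have hcosb0 : Real.cos (Real.pi/2 + δ) ≤ 0 :=
        Real.cos_nonpos_of_pi_div_two_le_of_le (by linarith) (by linarith)
      have hgap : 2 * ε ≤ Real.cos (Real.pi/2 + δ') - Real.cos (Real.pi/2 + δ) := by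
        have heq : θgap = (Real.cos (Real.pi/2 + δ') - Real.cos (Real.pi/2 + δ))/2 := by
          rw [hθ, if_pos hcase]
        rw [heq] at hε3
        linarith
      have hchain := re_abs_chain hune hd (neg_one_le_cos _) hcosb0 hgap ha
      exact (abs_arg_lt_iff hu'ne (by linarith) (by linarith)).mpr hchain
    · push_neg at hcase
      calc |Complex.arg (1 - w)| ≤ Real.pi := Complex.abs_arg_le_pi _
        _ < Real.pi/2 + δ := by linarith




noncomputable def polyBound (R : ℝ) {d : ℕ} (p : MvPolynomial (Fin d) ℂ) : ℝ :=
  (∑ m ∈ p.support, ‖MvPolynomial.coeff m p‖) * R ^ p.totalDegree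

lemma polyBound_nonneg (R : ℝ) (hR : 0 ≤ R) {d : ℕ} (p : MvPolynomial (Fin d) ℂ) :
    0 ≤ polyBound R p := by
  unfold polyBound
  apply mul_nonneg
  · exact Finset.sum_nonneg fun m _ => norm_nonneg _
  · positivity

lemma abs_eval_le (R : ℝ) (hR : 1 ≤ R) {d : ℕ} (p : MvPolynomial (Fin d) ℂ)
    (z : Fin d → ℂ) (hz : ∀ j, ‖z j‖ ≤ R) :
    ‖MvPolynomial.eval z p‖ ≤ polyBound R p := by
  have hR0 : 0 ≤ R := le_trans zero_le_one hR
  rw [MvPolynomial.eval_eq']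
  refine le_trans (norm_sum_le _ _) ?_
  unfold polyBound
  rw [Finset.sum_mul]
  apply Finset.sum_le_sum
  intro m hm
  rw [norm_mul]
  apply mul_le_mul_of_nonneg_left _ (norm_nonneg _)
  rw [norm_prod]
  calc ∏ j, ‖z j ^ m j‖
      ≤ ∏ j, R ^ m j := by
        apply Finset.prod_le_prod
        · intro j _; exact norm_nonneg _
        · intro j _; rw [norm_pow]; exact pow_le_pow_left₀ (norm_nonneg _) (hz j) _
    _ = R ^ (∑ j, m j) := by rw [← Finset.prod_pow_eq_pow_sum]
    _ ≤ R ^ p.totalDegree := by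
        apply pow_le_pow_right₀ hR
        have h1 : (∑ j, m j) = m.sum fun _ e => e := by
          rw [Finsupp.sum_fintype]; intro _; rfl
        rw [h1]
        exact MvPolynomial.le_totalDegree hm



lemma coeff_prod_general {ι : Type*} (s : Finset ι) (f : ι → Polynomial ℂ) (dg : ι → ℕ)
    (h : ∀ i ∈ s, (f i).natDegree ≤ dg i) :
    (∏ i ∈ s, f i).coeff (∑ i ∈ s, dg i) = ∏ i ∈ s, (f i).coeff (dg i) := by
  classical
  induction s using Finset.induction_on with
  | empty => simp
  | insert _ _ hnotmem ih =>
    rename_i a s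
    rw [Finset.prod_insert hnotmem, Finset.sum_insert hnotmem, Finset.prod_insert hnotmem]
    rw [Polynomial.coeff_mul_add_eq_of_natDegree_le (h a (Finset.mem_insert_self a s))
      (le_trans (Polynomial.natDegree_prod_le _ _)
        (Finset.sum_le_sum fun i hi => h i (Finset.mem_insert_of_mem hi)))]
    rw [ih fun i hi => h i (Finset.mem_insert_of_mem hi)]

/-- Substitution of an affine line into a multivariate polynomial. -/
noncomputable def lineSub {d : ℕ} (z v : Fin d → ℂ) (p : MvPolynomial (Fin d) ℂ) :
    Polynomial ℂ :=
  MvPolynomial.eval₂ Polynomial.C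
    (fun j => Polynomial.C (z j) + Polynomial.C (v j) * Polynomial.X) p

lemma lineSub_eval {d : ℕ} (z v : Fin d → ℂ) (p : MvPolynomial (Fin d) ℂ) (t : ℂ) :
    Polynomial.eval t (lineSub z v p) = MvPolynomial.eval (fun j => z j + v j * t) p := by
  unfold lineSub
  have h := MvPolynomial.eval₂_comp_left (Polynomial.evalRingHom t) Polynomial.C
    (fun j => Polynomial.C (z j) + Polynomial.C (v j) * Polynomial.X) p
  have h2 : (Polynomial.evalRingHom t).comp (Polynomial.C) = RingHom.id ℂ := by
    ext x; simp
  rw [h2, MvPolynomial.eval₂_id] at h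
  rw [show Polynomial.eval t (MvPolynomial.eval₂ Polynomial.C
      (fun j => Polynomial.C (z j) + Polynomial.C (v j) * Polynomial.X) p)
    = (Polynomial.evalRingHom t) (MvPolynomial.eval₂ Polynomial.C
      (fun j => Polynomial.C (z j) + Polynomial.C (v j) * Polynomial.X) p) from rfl, h]
  have h3 : (⇑(Polynomial.evalRingHom t) ∘ fun j => Polynomial.C (z j) + Polynomial.C (v j) * Polynomial.X)
      = fun j => z j + v j * t := by
    funext j
    simp
  rw [h3]

lemma lineSub_natDegree_le {d : ℕ} (z v : Fin d → ℂ) (p : MvPolynomial (Fin d) ℂ) :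
    (lineSub z v p).natDegree ≤ p.totalDegree := by
  unfold lineSub
  rw [MvPolynomial.eval₂_eq']
  apply le_trans (Polynomial.natDegree_sum_le _ _)
  rw [Finset.fold_max_le]
  constructor
  · exact Nat.zero_le _
  intro m hm
  apply le_trans (Polynomial.natDegree_mul_le)
  rw [Polynomial.natDegree_C, zero_add]
  refine le_trans (Polynomial.natDegree_prod_le _ _) ?_
  have hstep : ∀ j : Fin d, ((Polynomial.C (z j) + Polynomial.C (v j) * Polynomial.X) ^ m j).natDegree ≤ m j := by
    intro j
    refine le_trans Polynomial.natDegree_pow_le ?_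
    have h1 : (Polynomial.C (z j) + Polynomial.C (v j) * Polynomial.X).natDegree ≤ 1 := by
      compute_degree
    nlinarith
  refine le_trans (Finset.sum_le_sum fun j _ => hstep j) ?_
  have h1 : (∑ j, m j) = m.sum fun _ e => e := by
    rw [Finsupp.sum_fintype]; intro _; rfl
  rw [h1]
  exact MvPolynomial.le_totalDegree hm

lemma lineSub_coeff_top {d : ℕ} (z v : Fin d → ℂ) (p : MvPolynomial (Fin d) ℂ) :
    (lineSub z v p).coeff p.totalDegree
      = MvPolynomial.eval v (MvPolynomial.homogeneousComponent p.totalDegree p) := by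
  classical
  set D := p.totalDegree with hD
  unfold lineSub
  rw [MvPolynomial.eval₂_eq', Polynomial.finset_sum_coeff]
  -- RHS
  rw [MvPolynomial.homogeneousComponent_apply, map_sum]
  rw [← Finset.sum_filter_add_sum_filter_not p.support (fun m => m.degree = D)]
  have hzero : ∑ m ∈ p.support.filter (fun m => ¬ m.degree = D),
      (Polynomial.C (MvPolynomial.coeff m p) *
        ∏ j, (Polynomial.C (z j) + Polynomial.C (v j) * Polynomial.X) ^ m j).coeff D = 0 := by
    apply Finset.sum_eq_zero
    intro m hm
    rw [Finset.mem_filter] at hm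
    obtain ⟨hm1, hm2⟩ := hm
    apply Polynomial.coeff_eq_zero_of_natDegree_lt
    have hdeg : (∑ j, m j) < D := by
      have hle : (∑ j, m j) ≤ D := by
        have h1 : (∑ j, m j) = m.sum fun _ e => e := by
          rw [Finsupp.sum_fintype]; intro _; rfl
        rw [h1, hD]
        exact MvPolynomial.le_totalDegree hm1
      rcases lt_or_eq_of_le hle with h | h
      · exact h
      · exfalso
        apply hm2
        rw [Finsupp.degree_apply]
        rw [← h]
        rw [Finset.sum_subset (Finset.subset_univ m.support)]
        intro x _ hx
        simpa using hx
    calc (Polynomial.C (MvPolynomial.coeff m p) *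
          ∏ j, (Polynomial.C (z j) + Polynomial.C (v j) * Polynomial.X) ^ m j).natDegree
        ≤ ∑ j, m j := by
          refine le_trans Polynomial.natDegree_mul_le ?_
          rw [Polynomial.natDegree_C, zero_add]
          refine le_trans (Polynomial.natDegree_prod_le _ _) ?_
          apply Finset.sum_le_sum
          intro j _
          refine le_trans Polynomial.natDegree_pow_le ?_
          have h1 : (Polynomial.C (z j) + Polynomial.C (v j) * Polynomial.X).natDegree ≤ 1 := by
            compute_degree
          nlinarith
      _ < D := hdeg
  rw [hzero, add_zero]
  apply Finset.sum_congr rfl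
  intro m hm
  rw [Finset.mem_filter] at hm
  obtain ⟨hm1, hm2⟩ := hm
  have hsum : (∑ j, m j) = D := by
    rw [← hm2, Finsupp.degree_apply]
    rw [Finset.sum_subset (Finset.subset_univ m.support)]
    intro x _ hx
    simpa using hx
  rw [Polynomial.coeff_C_mul]
  rw [← hsum]
  rw [coeff_prod_general Finset.univ _ (fun j => m j) (fun j _ => by
    refine le_trans Polynomial.natDegree_pow_le ?_
    have h1 : (Polynomial.C (z j) + Polynomial.C (v j) * Polynomial.X).natDegree ≤ 1 := by
      compute_degree
    nlinarith)]
  rw [MvPolynomial.eval_monomial]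
  have hprod : (m.prod fun n e => v n ^ e) = ∏ j, v j ^ m j := by
    rw [Finsupp.prod_fintype]
    intro _; rfl
  rw [hprod]
  congr 1
  apply Finset.prod_congr rfl
  intro j _
  have h1 : (Polynomial.C (z j) + Polynomial.C (v j) * Polynomial.X).natDegree ≤ 1 := by
    compute_degree
  have h2 := Polynomial.coeff_pow_of_natDegree_le (m := m j) h1
  rw [mul_one] at h2
  rw [h2]
  congr 1
  simp



lemma root_bound {n : ℕ} (hn : 1 ≤ n) (P : ℕ → ℂ) (w : ℂ)
    (hsum : ∑ k ∈ Finset.range (n+1), P k * w ^ k = 0)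
    (B : ℕ → ℝ) (hB : ∀ k, k ≤ n → ‖P k‖ ≤ B k) (hBnn : ∀ k, 0 ≤ B k) :
    ‖P n * w‖ ≤ 1 + ∑ k ∈ Finset.range n, B k * B n ^ (n - 1 - k) := by
  set v := P n * w with hv
  set S := ∑ k ∈ Finset.range n, B k * B n ^ (n - 1 - k) with hS
  have hSnn : 0 ≤ S := by
    apply Finset.sum_nonneg
    intro k _
    exact mul_nonneg (hBnn k) (pow_nonneg (hBnn n) _)
  have h3 : P n ^ (n-1) * (∑ k ∈ Finset.range (n+1), P k * w ^ k) = 0 := by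
    rw [hsum, mul_zero]
  rw [Finset.sum_range_succ, mul_add, Finset.mul_sum] at h3
  have hvn : v ^ n = P n ^ (n-1) * (P n * w ^ n) := by
    rw [hv, mul_pow, ← mul_assoc]
    congr 1
    rw [← pow_succ]
    congr 1
    omega
  have hterm : ∀ k ∈ Finset.range n,
      P n ^ (n-1) * (P k * w ^ k) = (P k * P n ^ (n - 1 - k)) * v ^ k := by
    intro k hk
    rw [Finset.mem_range] at hk
    rw [hv, mul_pow]
    have h4 : P k * P n ^ (n-1-k) * (P n ^ k * w ^ k)
        = (P k * (P n ^ (n-1-k) * P n ^ k)) * w ^ k := by ring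
    rw [h4, ← pow_add]
    have h5 : n - 1 - k + k = n - 1 := by omega
    rw [h5]
    ring
  rw [Finset.sum_congr rfl hterm] at h3
  have hid : v ^ n = - ∑ k ∈ Finset.range n, (P k * P n ^ (n - 1 - k)) * v ^ k := by
    rw [hvn]
    linear_combination h3
  by_contra habs
  push_neg at habs
  have hv1 : 1 < ‖v‖ := by linarith
  have hvpos : 0 < ‖v‖ := by linarith
  have hbound : ‖v‖ ^ n ≤ S * ‖v‖ ^ (n-1) := by
    calc ‖v‖ ^ n = ‖v ^ n‖ := (norm_pow _ _).symm
      _ = ‖∑ k ∈ Finset.range n, (P k * P n ^ (n - 1 - k)) * v ^ k‖ := by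
          rw [hid, norm_neg]
      _ ≤ ∑ k ∈ Finset.range n, ‖(P k * P n ^ (n - 1 - k)) * v ^ k‖ :=
          norm_sum_le _ _
      _ ≤ ∑ k ∈ Finset.range n, (B k * B n ^ (n-1-k)) * ‖v‖ ^ (n-1) := by
          apply Finset.sum_le_sum
          intro k hk
          rw [Finset.mem_range] at hk
          rw [norm_mul, norm_mul, norm_pow, norm_pow]
          have h6 : ‖P k‖ * ‖P n‖ ^ (n-1-k)
              ≤ B k * B n ^ (n-1-k) := by
            apply mul_le_mul (hB k (by omega)) _ (pow_nonneg (norm_nonneg _) _) (hBnn k)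
            exact pow_le_pow_left₀ (norm_nonneg _) (hB n le_rfl) _
          have h7 : ‖v‖ ^ k ≤ ‖v‖ ^ (n-1) :=
            pow_le_pow_right₀ hv1.le (by omega)
          have h8 : (0:ℝ) ≤ ‖v‖ ^ k := pow_nonneg (norm_nonneg _) _
          nlinarith [mul_nonneg (norm_nonneg (P k))
            (pow_nonneg (norm_nonneg (P n)) (n-1-k))]
      _ = S * ‖v‖ ^ (n-1) := by rw [← Finset.sum_mul]
  have h9 : ‖v‖ ^ n = ‖v‖ ^ (n-1) * ‖v‖ := by
    rw [← pow_succ]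
    congr 1
    omega
  rw [h9] at hbound
  have h10 : ‖v‖ ≤ S := by
    have h11 : 0 < ‖v‖ ^ (n-1) := pow_pos hvpos _
    nlinarith
  linarith

lemma exists_eval_ne_zero {d : ℕ} (p : MvPolynomial (Fin d) ℂ) (hp : p ≠ 0) :
    ∃ v : Fin d → ℂ,
      MvPolynomial.eval v (MvPolynomial.homogeneousComponent p.totalDegree p) ≠ 0 := by
  by_contra h
  push_neg at h
  have hzero : MvPolynomial.homogeneousComponent p.totalDegree p = 0 := by
    apply MvPolynomial.funext
    intro x
    rw [h x, map_zero]
  have hsupp : p.support.Nonempty := MvPolynomial.support_nonempty.mpr hp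
  obtain ⟨m, hm, hdeg⟩ := Finset.exists_mem_eq_sup p.support hsupp
    (fun s => s.sum fun _ e => e)
  have hcoeff : MvPolynomial.coeff m (MvPolynomial.homogeneousComponent p.totalDegree p)
      = MvPolynomial.coeff m p := by
    rw [MvPolynomial.coeff_homogeneousComponent, if_pos]
    rw [MvPolynomial.totalDegree, hdeg]
    rfl
  rw [hzero] at hcoeff
  simp only [MvPolynomial.coeff_zero] at hcoeff
  exact (MvPolynomial.mem_support_iff.mp hm) hcoeff.symm




/-- algebraic functions analytic on `Δ_δ^d` are of polynomial
type on every `Δ_{δ'}^d` with `δ' < δ`. -/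
theorem stmt19 (d : ℕ) (hd : 1 ≤ d) (δ : ℝ) (hδ : 0 < δ)
    (A : (Fin d → ℂ) → ℂ) (hA : AnalyticOnNhd ℂ A (DeltaDomD d δ))
    (E : MvPolynomial (Fin (d + 1)) ℂ) (hE : E ≠ 0)
    (halg : ∀ z ∈ DeltaDomD d δ, MvPolynomial.eval (Fin.cons (A z) z) E = 0) :
    ∀ δ' ∈ Set.Ioo (0 : ℝ) δ, PolyTypeDelta d δ' A := by
  classical
  rintro δ' ⟨hδ'0, hδ'δ⟩
  -- ### Polynomial setup
  set E₁ : MvPolynomial (Fin (d+1)) ℂ := E * MvPolynomial.X 0 with hE₁def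
  have hE₁ : E₁ ≠ 0 := mul_ne_zero hE (MvPolynomial.X_ne_zero 0)
  set F : Polynomial (MvPolynomial (Fin d) ℂ) := MvPolynomial.finSuccEquiv ℂ d E₁ with hFdef
  have hF : F ≠ 0 := fun hc => hE₁
    ((map_eq_zero_iff _ (AlgEquiv.injective (MvPolynomial.finSuccEquiv ℂ d))).mp hc)
  have hGne : MvPolynomial.finSuccEquiv ℂ d E ≠ 0 := fun hc => hE
    ((map_eq_zero_iff _ (AlgEquiv.injective (MvPolynomial.finSuccEquiv ℂ d))).mp hc)
  have hFfact : F = (MvPolynomial.finSuccEquiv ℂ d E) * Polynomial.X := by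
    rw [hFdef, hE₁def, map_mul, MvPolynomial.finSuccEquiv_X_zero]
  set n := F.natDegree with hndef
  have hn1 : 1 ≤ n := by
    rw [hndef, hFfact, Polynomial.natDegree_mul hGne Polynomial.X_ne_zero,
      Polynomial.natDegree_X]
    omega
  have halg₁ : ∀ z ∈ DeltaDomD d δ,
      ∑ k ∈ Finset.range (n + 1), MvPolynomial.eval z (F.coeff k) * (A z) ^ k = 0 := by
    intro z hz
    have h0 : MvPolynomial.eval (Fin.cons (A z) z) E₁ = 0 := by
      rw [hE₁def, map_mul, halg z hz, zero_mul]
    rw [MvPolynomial.eval_eq_eval_mv_eval', ← hFdef] at h0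
    rw [Polynomial.eval_eq_sum_range'
      (lt_of_le_of_lt Polynomial.natDegree_map_le (Nat.lt_succ_self n))] at h0
    simpa [Polynomial.coeff_map] using h0
  -- ### The uniform bound C₀ for pn * A
  set Rb : ℝ := 1 + δ with hRbdef
  have hRb : 1 ≤ Rb := by rw [hRbdef]; linarith
  set Bk : ℕ → ℝ := fun k => polyBound Rb (F.coeff k) with hBkdef
  set S₀ : ℝ := ∑ k ∈ Finset.range n, Bk k * Bk n ^ (n - 1 - k) with hS₀def
  set C₀ : ℝ := 1 + S₀ with hC₀def
  have hBknn : ∀ k, 0 ≤ Bk k := fun k => polyBound_nonneg Rb (by linarith) _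
  have hS₀nn : 0 ≤ S₀ := by
    rw [hS₀def]
    exact Finset.sum_nonneg fun k _ => mul_nonneg (hBknn k) (pow_nonneg (hBknn n) _)
  have hC₀pos : 0 < C₀ := by rw [hC₀def]; linarith
  set pn := F.leadingCoeff with hpndef
  have hpn : pn ≠ 0 := Polynomial.leadingCoeff_ne_zero.mpr hF
  have hC₀ : ∀ y ∈ DeltaDomD d δ, ‖MvPolynomial.eval y pn * A y‖ ≤ C₀ := by
    intro y hy
    have hcoords : ∀ j, ‖y j‖ ≤ Rb := fun j => (hy j).1.le
    have hroot := root_bound hn1 (fun k => MvPolynomial.eval y (F.coeff k)) (A y)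
      (halg₁ y hy) Bk (fun k _ => abs_eval_le Rb hRb _ y hcoords) hBknn
    rw [hpndef, Polynomial.leadingCoeff, ← hndef]
    exact hroot
  clear_value E₁ F n Bk S₀ C₀ pn
  -- ### direction choice
  set D := pn.totalDegree with hDdef
  obtain ⟨v, hv⟩ := exists_eval_ne_zero pn hpn
  rw [← hDdef] at hv
  clear_value D
  set a : ℂ := MvPolynomial.eval v (MvPolynomial.homogeneousComponent D pn) with hadef
  have ha : a ≠ 0 := hv
  have hapos : 0 < ‖a‖ := norm_pos_iff.mpr ha
  set W : ℝ := 1 + ∑ j, ‖v j‖ with hWdef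
  have hsumvnn : 0 ≤ ∑ j, ‖v j‖ :=
    Finset.sum_nonneg fun j _ => norm_nonneg _
  have hW1 : 1 ≤ W := by rw [hWdef]; linarith
  have hWpos : 0 < W := by linarith
  have hvW : ∀ j, ‖v j‖ ≤ W := by
    intro j
    have h1 : ‖v j‖ ≤ ∑ j, ‖v j‖ :=
      Finset.single_le_sum (fun i _ => norm_nonneg (v i)) (Finset.mem_univ j)
    rw [hWdef]; linarith
  clear_value a W
  obtain ⟨ε, hεpos, hεhalf, hεprop⟩ := delta_geom hδ'0 hδ'δ
  -- ### final constants
  set M : ℝ := (D:ℝ)^2 + 1 with hMdef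
  have hMpos : 0 < M := by rw [hMdef]; positivity
  set K : ℝ := (16 * W / ε) ^ (D^2) with hKdef
  have hKpos : 0 < K := by rw [hKdef]; exact pow_pos (div_pos (by linarith) hεpos) _
  set C₁ : ℝ := C₀ / ‖a‖ with hC₁def
  have hC₁pos : 0 < C₁ := div_pos hC₀pos hapos
  clear_value M K C₁
  have h2δ' : (0:ℝ) < 2 + δ' := by linarith
  have h2δ'M : (0:ℝ) < (2 + δ') ^ M := Real.rpow_pos_of_pos h2δ' M
  refine ⟨C₁ * K * (2 + δ') ^ M, mul_pos (mul_pos hC₁pos hKpos) h2δ'M, M, hMpos, ?_⟩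
  intro z hz
  -- ### geometry at z
  have hne : (Finset.univ : Finset (Fin d)).Nonempty := by
    have : Nonempty (Fin d) := Fin.pos_iff_nonempty.mp (by omega)
    exact Finset.univ_nonempty
  set μ := Finset.univ.inf' hne (fun j => ‖z j - 1‖) with hμdef
  have hμpos : 0 < μ := by
    rw [hμdef, Finset.lt_inf'_iff]
    intro j _
    rw [norm_pos_iff, sub_ne_zero]
    exact (hz j).2.1
  have hμle : ∀ j, μ ≤ ‖z j - 1‖ := by
    intro j
    rw [hμdef]
    exact Finset.inf'_le _ (Finset.mem_univ j)
  clear_value μ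
  set m0 := min 1 μ with hm0def
  have hm0pos : 0 < m0 := lt_min one_pos hμpos
  have hm0le1 : m0 ≤ 1 := min_le_left _ _
  clear_value m0
  set R := ε * m0 / W with hRdef
  have hRpos : 0 < R := by rw [hRdef]; exact div_pos (mul_pos hεpos hm0pos) hWpos
  have hR1 : R ≤ 1 := by
    rw [hRdef]
    have h1 : ε * m0 ≤ 1 := by nlinarith
    calc ε * m0 / W ≤ ε * m0 / 1 := by
          apply div_le_div_of_nonneg_left (mul_nonneg hεpos.le hm0pos.le) one_pos hW1
      _ = ε * m0 := by ring
      _ ≤ 1 := h1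
  clear_value R
  have hball : ∀ t ∈ Metric.ball (0:ℂ) R, (fun j => z j + v j * t) ∈ DeltaDomD d δ := by
    intro t ht j
    apply hεprop (z j) (hz j)
    have htabs : ‖t‖ < R := by
      simpa [Metric.mem_ball, dist_zero_right] using ht
    have h1 : (z j + v j * t) - z j = v j * t := by ring
    rw [h1, norm_mul]
    have h2 : ‖v j‖ * ‖t‖ ≤ W * R :=
      mul_le_mul (hvW j) htabs.le (norm_nonneg _) hWpos.le
    have h3 : W * R = ε * m0 := by rw [hRdef]; field_simp
    have h4 : m0 ≤ min 1 (‖z j - 1‖) := by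
      rw [hm0def]
      exact le_min (min_le_left _ _) (le_trans (min_le_right _ _) (hμle j))
    calc ‖v j‖ * ‖t‖ ≤ W * R := h2
      _ = ε * m0 := h3
      _ ≤ ε * min 1 (‖z j - 1‖) := by
          apply mul_le_mul_of_nonneg_left h4 hεpos.le
  set h : ℂ → ℂ := fun t => A (fun j => z j + v j * t) with hhdef
  have hdiff : DifferentiableOn ℂ h (Metric.ball 0 R) := by
    intro t ht
    apply DifferentiableAt.differentiableWithinAt
    have hinner : DifferentiableAt ℂ (fun t : ℂ => (fun j => z j + v j * t)) t := by
      apply differentiableAt_pi.mpr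
      intro j
      exact (differentiableAt_const _).add ((differentiableAt_const _).mul differentiableAt_id)
    exact DifferentiableAt.comp t (hA _ (hball t ht)).differentiableAt hinner
  -- ### factorization of the substituted leading coefficient
  set Pz := lineSub z v pn with hPzdef
  have hPzcoeff : Pz.coeff D = a := by
    rw [hPzdef, hDdef, lineSub_coeff_top, hadef, hDdef]
  have hPzdeg : Pz.natDegree = D :=
    le_antisymm (hPzdef ▸ hDdef ▸ lineSub_natDegree_le z v pn)
      (Polynomial.le_natDegree_of_ne_zero (hPzcoeff ▸ ha))
  have hPzlead : Pz.leadingCoeff = a := by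
    rw [Polynomial.leadingCoeff, hPzdeg, hPzcoeff]
  have hcard : Multiset.card Pz.roots = D := by
    rw [← hPzdeg]
    exact (Polynomial.splits_iff_card_roots).mp (IsAlgClosed.splits Pz)
  have hfact := (IsAlgClosed.splits Pz).eq_prod_roots
  have hevalid : ∀ t : ℂ, MvPolynomial.eval (fun j => z j + v j * t) pn
      = a * ((Pz.roots.map (fun c => t - c)).prod) := by
    intro t
    rw [← lineSub_eval z v pn t, ← hPzdef]
    conv_lhs => rw [hfact]
    rw [hPzlead, Polynomial.eval_mul, Polynomial.eval_C, Polynomial.eval_multiset_prod,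
      Multiset.map_map]
    congr 2
    apply Multiset.map_congr rfl
    intro c _
    simp
  have hbound : ∀ t ∈ Metric.ball (0:ℂ) R,
      ‖(Pz.roots.map (fun c => t - c)).prod * h t‖ ≤ C₁ := by
    intro t ht
    have h1 := hC₀ _ (hball t ht)
    rw [hevalid t] at h1
    rw [hC₁def, le_div_iff₀ hapos]
    calc ‖(Pz.roots.map (fun c => t - c)).prod * h t‖ * ‖a‖
        = ‖a * (Pz.roots.map (fun c => t - c)).prod
            * A (fun j => z j + v j * t)‖ := by
          simp only [norm_mul, hhdef]; ring
      _ ≤ C₀ := h1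
  have hfinal := multi_step hC₁pos.le Pz.roots R hRpos hR1 h hdiff hbound 0
    (by rw [Metric.mem_ball, dist_self]; exact div_pos hRpos (by positivity))
  rw [hcard] at hfinal
  have hA0 : h 0 = A z := by
    rw [hhdef]
    show A (fun j => z j + v j * 0) = A z
    congr 1
    funext j
    simp
  rw [hA0] at hfinal
  -- ### conversion to the rpow bound
  have h16R : (16 / R) ^ (D^2) = K * (1/m0)^(D^2) := by
    rw [hKdef, ← mul_pow]
    congr 1
    rw [hRdef]
    field_simp
  have hm0rpow : ((1:ℝ)/m0)^(D^2) = m0 ^ (-((D:ℝ)^2)) := by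
    have e1 : ((1:ℝ)/m0)^(D^2) = (m0 ^ (D^2 : ℕ))⁻¹ := by
      rw [one_div, inv_pow]
    have e2 : (m0 ^ (D^2 : ℕ) : ℝ) = m0 ^ (((D:ℝ))^2) := by
      rw [← Real.rpow_natCast m0 (D^2)]
      congr 1
      push_cast
      ring
    rw [e1, e2]
    exact (Real.rpow_neg hm0pos.le _).symm
  have hstep1 : m0 ^ (-((D:ℝ)^2)) ≤ m0 ^ (-M) := by
    apply Real.rpow_le_rpow_of_exponent_ge hm0pos hm0le1
    rw [hMdef]; linarith
  have hμle2 : μ ≤ m0 * (2 + δ') := by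
    rcases le_total μ 1 with hc | hc
    · have heq : m0 = μ := by rw [hm0def]; exact min_eq_right hc
      calc μ = m0 := heq.symm
        _ = m0 * 1 := (mul_one m0).symm
        _ ≤ m0 * (2 + δ') := mul_le_mul_of_nonneg_left (by linarith) hm0pos.le
    · have heq : m0 = 1 := by rw [hm0def]; exact min_eq_left hc
      rw [heq, one_mul]
      set j0 : Fin d := ⟨0, by omega⟩
      have h5 : ‖z j0 - 1‖ ≤ ‖z j0‖ + 1 := by
        have h51 := norm_add_le (z j0) (-1)
        rw [norm_neg, norm_one] at h51
        calc ‖z j0 - 1‖ = ‖z j0 + -1‖ := by ring_nf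
          _ ≤ ‖z j0‖ + 1 := h51
      have h6 := (hz j0).1
      have h7 := hμle j0
      linarith
  have hstep2 : m0 ^ (-M) ≤ (2 + δ') ^ M * μ ^ (-M) := by
    have hμM : 0 < μ ^ M := Real.rpow_pos_of_pos hμpos M
    have hm0M : 0 < m0 ^ M := Real.rpow_pos_of_pos hm0pos M
    have hkey : μ ^ M ≤ (2 + δ') ^ M * m0 ^ M := by
      have h1 : μ ^ M ≤ (m0 * (2 + δ')) ^ M :=
        Real.rpow_le_rpow hμpos.le hμle2 hMpos.le
      rwa [Real.mul_rpow hm0pos.le h2δ'.le, mul_comm] at h1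
    rw [Real.rpow_neg hm0pos.le, Real.rpow_neg hμpos.le]
    have h2 : (m0 ^ M)⁻¹ * (μ ^ M) ≤ (2 + δ') ^ M := by
      rw [inv_mul_le_iff₀ hm0M]
      calc μ ^ M ≤ (2 + δ') ^ M * m0 ^ M := hkey
        _ = m0 ^ M * (2 + δ') ^ M := by ring
    calc (m0 ^ M)⁻¹ = ((m0 ^ M)⁻¹ * μ ^ M) * (μ ^ M)⁻¹ := by field_simp
      _ ≤ (2 + δ') ^ M * (μ ^ M)⁻¹ :=
          mul_le_mul_of_nonneg_right h2 (inv_nonneg.mpr hμM.le)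
  have hstep3 : μ ^ (-M) ≤ ∑ j, ‖z j - 1‖ ^ (-M) := by
    obtain ⟨j0, _, hj0⟩ := Finset.exists_mem_eq_inf' hne (fun j => ‖z j - 1‖)
    have heq : μ ^ (-M) = ‖z j0 - 1‖ ^ (-M) := by rw [hμdef, hj0]
    rw [heq]
    exact Finset.single_le_sum (f := fun j => ‖z j - 1‖ ^ (-M))
      (fun j _ => Real.rpow_nonneg (norm_nonneg _) _) (Finset.mem_univ j0)
  have hSuminn : 0 ≤ ∑ j, ‖z j - 1‖ ^ (-M) :=
    Finset.sum_nonneg fun j _ => Real.rpow_nonneg (norm_nonneg _) _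
  calc ‖A z‖ ≤ C₁ * (16 / R) ^ (D ^ 2) := hfinal
    _ = C₁ * K * ((1/m0)^(D^2)) := by rw [h16R]; ring
    _ = C₁ * K * (m0 ^ (-((D:ℝ)^2))) := by rw [hm0rpow]
    _ ≤ C₁ * K * (m0 ^ (-M)) := by
        apply mul_le_mul_of_nonneg_left hstep1 (mul_pos hC₁pos hKpos).le
    _ ≤ C₁ * K * ((2 + δ') ^ M * μ ^ (-M)) := by
        apply mul_le_mul_of_nonneg_left hstep2 (mul_pos hC₁pos hKpos).le
    _ = C₁ * K * (2 + δ') ^ M * μ ^ (-M) := by ring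
    _ ≤ C₁ * K * (2 + δ') ^ M * ∑ j, ‖z j - 1‖ ^ (-M) := by
        apply mul_le_mul_of_nonneg_left hstep3
          (mul_pos (mul_pos hC₁pos hKpos) h2δ'M).le

end ACSV
end
end
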